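/- arXiv:1201.2147 — 4 statements merged into one kernel-verified Lean document; each statement's English description precedes it below -/
import Mathlib

section
/- For every multi-index p ∈ ℕⁿ with |p| ≤ m, ∫_{(0,∞)ⁿ} t₁^{p₁} ⋯ tₙ^{pₙ} · (1 + t₁ + ⋯ + tₙ)^{-(n+m+1)} dt₁ ⋯ dtₙ = p! · (m − |p|)! / (n+m)!. -/
open MeasureTheory Set Filter Topology
open scoped ENNReal

lemma aux_base_int (a : ℝ) (ha : 0 < a) :
    IntegrableOn (fun t : ℝ => ((a + t) ^ 2)⁻¹) (Ioi 0) := by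
  have hderiv : ∀ x ∈ Ioi (0:ℝ), HasDerivAt (fun t : ℝ => -(a + t)⁻¹) (((a + x) ^ 2)⁻¹) x := by
    intro x hx
    have hx' : (0:ℝ) < a + x := by have := hx.out; linarith
    have h1 : HasDerivAt (fun t : ℝ => a + t) 1 x := (hasDerivAt_id x).const_add a
    have h2 := (h1.inv hx'.ne').neg
    refine h2.congr_deriv ?_; symm
    rw [neg_div, neg_neg, one_div]
  have htend : Tendsto (fun t : ℝ => -(a + t)⁻¹) atTop (𝓝 0) := by
    rw [show (0:ℝ) = -0 by norm_num]
    exact (tendsto_inv_atTop_zero.comp (tendsto_atTop_add_const_left _ a tendsto_id)).neg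
  have hcont : ContinuousWithinAt (fun t : ℝ => -(a + t)⁻¹) (Ici 0) 0 := by
    apply ContinuousAt.continuousWithinAt
    have : (a + 0) ≠ 0 := by linarith
    fun_prop (disch := assumption)
  exact integrableOn_Ioi_deriv_of_nonneg hcont hderiv
    (fun x hx => by have := hx.out; positivity) htend

lemma aux_integrable (p N : ℕ) (a : ℝ) (ha : 0 < a) (hN : p + 2 ≤ N) :
    IntegrableOn (fun t : ℝ => t ^ p * ((a + t) ^ N)⁻¹) (Ioi 0) := by
  set k := N - p - 2 with hk
  have hNe : N = p + k + 2 := by omega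
  refine Integrable.mono' (((aux_base_int a ha).const_mul ((a ^ k)⁻¹))) ?_ ?_
  · exact ((measurable_id.pow_const p).mul
      (((measurable_const.add measurable_id).pow_const N).inv)).aestronglyMeasurable
  · rw [ae_restrict_iff' measurableSet_Ioi]
    refine ae_of_all _ fun x hx => ?_
    have hx0 : (0:ℝ) < x := hx.out
    have hax : (0:ℝ) < a + x := by linarith
    have key : x ^ p * a ^ k * (a + x) ^ 2 ≤ (a + x) ^ N := by
      rw [hNe, pow_add, pow_add]
      gcongr <;> linarith
    rw [Real.norm_eq_abs, abs_of_nonneg (by positivity)]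
    have h2 : x ^ p / (a + x) ^ N ≤ (a ^ k)⁻¹ / (a + x) ^ 2 := by
      rw [div_le_div_iff₀ (by positivity) (by positivity)]
      calc x ^ p * (a + x) ^ 2 = (a ^ k)⁻¹ * (x ^ p * a ^ k * (a + x) ^ 2) := by
            field_simp
        _ ≤ (a ^ k)⁻¹ * (a + x) ^ N := by gcongr
    simpa [div_eq_mul_inv] using h2

lemma aux_value : ∀ (p : ℕ) (N : ℕ) (a : ℝ), 0 < a → p + 2 ≤ N →
    ∫ t in Ioi (0:ℝ), t ^ p * ((a + t) ^ N)⁻¹ =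
      (p.factorial * (N - p - 2).factorial / (N - 1).factorial) * (a ^ (N - p - 1))⁻¹ := by
  intro p
  induction p with
  | zero =>
    intro N a ha hN
    have hN1 : 1 ≤ N - 1 := by omega
    have F' : ∀ x ∈ Ici (0:ℝ), HasDerivAt (fun t : ℝ => -(((N - 1 : ℕ) : ℝ)⁻¹ * ((a + t) ^ (N - 1))⁻¹))
        (1 ^ 0 * ((a + x) ^ N)⁻¹) x := by
      intro x hx
      have hax : (0:ℝ) < a + x := by have := hx.out; linarith
      have h1 : HasDerivAt (fun t : ℝ => a + t) 1 x := (hasDerivAt_id x).const_add a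
      have h2 := h1.pow (N - 1)
      have h3 := ((h2.inv (pow_ne_zero _ hax.ne')).const_mul (((N - 1 : ℕ) : ℝ)⁻¹)).neg
      refine h3.congr_deriv ?_; symm; simp only [Pi.pow_apply, Pi.inv_apply]
      have e1 : ((a + x) ^ (N - 1)) ^ 2 = (a + x) ^ (N - 1 - 1) * (a + x) ^ N := by
        rw [← pow_mul, ← pow_add]; congr 1; omega
      rw [e1]
      generalize hc : ((N - 1 : ℕ) : ℝ) = c
      have hNR : c ≠ 0 := by rw [← hc]; positivity
      have hA : (a + x) ^ (N - 1 - 1) ≠ 0 := pow_ne_zero _ hax.ne'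
      have hB : (a + x) ^ N ≠ 0 := pow_ne_zero _ hax.ne'
      field_simp
    have htend : Tendsto (fun t : ℝ => -(((N - 1 : ℕ) : ℝ)⁻¹ * ((a + t) ^ (N - 1))⁻¹)) atTop (𝓝 0) := by
      rw [show (0:ℝ) = -((((N - 1 : ℕ) : ℝ))⁻¹ * 0) by norm_num]
      refine (Tendsto.const_mul _ ?_).neg
      exact tendsto_inv_atTop_zero.comp
        ((tendsto_pow_atTop (by omega)).comp (tendsto_atTop_add_const_left _ a tendsto_id))
    have := integral_Ioi_of_hasDerivAt_of_tendsto' F' (by simpa using aux_integrable 0 N a ha hN) htend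
    simp only [pow_zero, one_mul] at this ⊢
    rw [this]
    have e2 : (N - 1).factorial = (N - 1) * (N - 0 - 2).factorial := by
      rw [show N - 0 - 2 = (N - 1) - 1 by omega, ← Nat.succ_pred_eq_of_pos (by omega : 0 < N - 1)]
      simp [Nat.factorial_succ]
    rw [e2, show N - 0 - 1 = N - 1 by omega]
    rw [Nat.cast_mul, Nat.factorial_zero]
    generalize hc : ((N - 1 : ℕ) : ℝ) = c
    have hNR : c ≠ 0 := by rw [← hc]; positivity
    have hf : ((N - 0 - 2).factorial : ℝ) ≠ 0 := by positivity
    have ha' : a ^ (N - 1) ≠ 0 := pow_ne_zero _ ha.ne'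
    field_simp
    ring
  | succ p ih =>
    intro N a ha hN
    have hN2 : p + 2 ≤ N - 1 := by omega
    set F : ℝ → ℝ := fun t => t ^ (p + 1) * ((a + t) ^ (N - 1))⁻¹ with hF
    set G : ℝ → ℝ := fun t => ((p:ℝ) + 1) * (t ^ p * ((a + t) ^ (N - 1))⁻¹)
      - ((N:ℝ) - 1) * (t ^ (p + 1) * ((a + t) ^ N)⁻¹) with hG
    have F' : ∀ x ∈ Ici (0:ℝ), HasDerivAt F (G x) x := by
      intro x hx
      have hax : (0:ℝ) < a + x := by have := hx.out; linarith
      have h1 : HasDerivAt (fun t : ℝ => a + t) 1 x := (hasDerivAt_id x).const_add a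
      have h2 := (h1.pow (N - 1)).inv (pow_ne_zero _ hax.ne')
      have h3 := (hasDerivAt_pow (p + 1) x).mul h2
      refine h3.congr_deriv ?_; symm; simp only [Pi.pow_apply, Pi.inv_apply]
      have e1 : ((a + x) ^ (N - 1)) ^ 2 = (a + x) ^ (N - 1 - 1) * (a + x) ^ N := by
        rw [← pow_mul, ← pow_add]; congr 1; omega
      have e2 : (a + x) ^ N = (a + x) ^ (N - 1) * (a + x) := by
        rw [← pow_succ]; congr 1; omega
      have hNR : ((N - 1 : ℕ) : ℝ) = (N : ℝ) - 1 := by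
        have : 1 ≤ N := by omega
        push_cast [this]; ring
      rw [hG, e1]
      simp only [Nat.add_sub_cancel, mul_one, hNR]
      rw [e2]
      field_simp
      push_cast; ring
    have htend : Tendsto F atTop (𝓝 0) := by
      apply squeeze_zero' (g := fun t : ℝ => (a + t)⁻¹)
      · filter_upwards [eventually_ge_atTop (0:ℝ)] with t ht
        have : (0:ℝ) < a + t := by linarith
        positivity
      · filter_upwards [eventually_ge_atTop (1:ℝ)] with t ht
        have h1 : (1:ℝ) ≤ a + t := by linarith
        have ht0 : (0:ℝ) ≤ t := by linarith
        have e3 : (a + t) ^ (N - 1) = (a + t) ^ (p + 1) * (a + t) ^ (N - p - 2) := by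
          rw [← pow_add]; congr 1; omega
        calc t ^ (p + 1) * ((a + t) ^ (N - 1))⁻¹
            ≤ (a + t) ^ (p + 1) * ((a + t) ^ (N - 1))⁻¹ := by gcongr; linarith
          _ = ((a + t) ^ (N - p - 2))⁻¹ := by
              rw [e3, mul_inv]
              field_simp
          _ ≤ (a + t)⁻¹ := by
              apply inv_anti₀ (by linarith)
              exact le_self_pow₀ h1 (by omega)
      · exact tendsto_inv_atTop_zero.comp (tendsto_atTop_add_const_left _ a tendsto_id)
    have hint : IntegrableOn G (Ioi 0) :=
      ((aux_integrable p (N - 1) a ha hN2).const_mul _).sub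
        ((aux_integrable (p + 1) N a ha hN).const_mul _)
    have key := integral_Ioi_of_hasDerivAt_of_tendsto' F' hint htend
    have hF0 : F 0 = 0 := by simp [hF]
    rw [hF0, sub_zero] at key
    rw [hG] at key
    rw [integral_sub ((aux_integrable p (N - 1) a ha hN2).const_mul _)
      ((aux_integrable (p + 1) N a ha hN).const_mul _), integral_const_mul, integral_const_mul,
      ih (N - 1) a ha hN2] at key
    have hJ : ∫ t in Ioi (0:ℝ), t ^ (p + 1) * ((a + t) ^ N)⁻¹
        = ((p:ℝ) + 1) * ((p.factorial * (N - 1 - p - 2).factorial / (N - 1 - 1).factorial)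
          * (a ^ (N - 1 - p - 1))⁻¹) / ((N:ℝ) - 1) := by
      have hN1 : (1:ℝ) ≤ (N:ℝ) := by exact_mod_cast (by omega : 1 ≤ N)
      have : (N:ℝ) - 1 ≠ 0 := by
        have : (2:ℝ) ≤ (N:ℝ) := by exact_mod_cast (by omega : 2 ≤ N)
        linarith
      field_simp at key ⊢
      linarith [key]
    rw [hJ]
    have e4 : N - 1 - p - 2 = N - (p + 1) - 2 := by omega
    have e5 : N - 1 - p - 1 = N - (p + 1) - 1 := by omega
    have e6 : (N - 1).factorial = (N - 1) * (N - 1 - 1).factorial := by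
      rw [← Nat.succ_pred_eq_of_pos (by omega : 0 < N - 1)]
      simp [Nat.factorial_succ]
    rw [e4, e5, e6, Nat.factorial_succ]
    have hNR : ((N - 1 : ℕ) : ℝ) = (N : ℝ) - 1 := by
      have : 1 ≤ N := by omega
      push_cast [this]; ring
    have h1 : ((N - 1 - 1).factorial : ℝ) ≠ 0 := by positivity
    have h2 : (N:ℝ) - 1 ≠ 0 := by
      have : (2:ℝ) ≤ (N:ℝ) := by exact_mod_cast (by omega : 2 ≤ N)
      linarith
    push_cast [hNR]
    field_simp

lemma aux_lint1D (p N : ℕ) (a : ℝ) (ha : 0 < a) (hN : p + 2 ≤ N) :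
    ∫⁻ t in Ioi (0:ℝ), ENNReal.ofReal (t ^ p * ((a + t) ^ N)⁻¹) =
      ENNReal.ofReal ((p.factorial * (N - p - 2).factorial / (N - 1).factorial)
        * (a ^ (N - p - 1))⁻¹) := by
  rw [← ofReal_integral_eq_lintegral_ofReal (aux_integrable p N a ha hN) ?_, aux_value p N a ha hN]
  rw [EventuallyLE, ae_restrict_iff' measurableSet_Ioi]
  refine ae_of_all _ fun x hx => ?_
  have hx0 : (0:ℝ) < x := hx.out
  have : (0:ℝ) < a + x := by linarith
  positivity

lemma aux_main : ∀ (n : ℕ) (m : ℕ) (p : Fin n → ℕ), (∑ j, p j) ≤ m →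
    ∫⁻ t in Set.univ.pi fun _ : Fin n => Ioi (0:ℝ),
        ENNReal.ofReal ((∏ j, t j ^ p j) * ((1 + ∑ j, t j) ^ (n + m + 1))⁻¹) =
      ENNReal.ofReal ((∏ j, ((p j).factorial : ℝ)) * (m - ∑ j, p j).factorial
        / (n + m).factorial) := by
  intro n
  induction n with
  | zero =>
    intro m p _
    simp only [Finset.univ_eq_empty, Finset.prod_empty, Finset.sum_empty, Nat.sub_zero]
    have h1 : (Set.univ.pi fun _ : Fin 0 => Ioi (0:ℝ)) = Set.univ := by
      ext t; simp
    rw [h1, Measure.restrict_univ, lintegral_const]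
    have h2 : (volume : Measure (Fin 0 → ℝ)) Set.univ = 1 := by
      rw [MeasureTheory.volume_pi, Measure.pi_univ]
      simp
    rw [h2, mul_one]
    norm_num
    rw [div_self (by positivity : ((m.factorial : ℝ)) ≠ 0)]
    exact ENNReal.ofReal_one.symm
  | succ n ih =>
    intro m p hp
    set S : Set (Fin n → ℝ) := Set.univ.pi fun _ : Fin n => Ioi (0:ℝ) with hS
    set e := MeasurableEquiv.piFinSuccAbove (fun _ : Fin (n + 1) => ℝ) 0 with he
    have hmp := measurePreserving_piFinSuccAbove (fun _ : Fin (n + 1) => (volume : Measure ℝ)) 0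
    set g : ℝ × (Fin n → ℝ) → ℝ≥0∞ := fun z =>
      ENNReal.ofReal ((z.1 ^ p 0 * ∏ j, z.2 j ^ p (Fin.succ j))
        * ((1 + (z.1 + ∑ j, z.2 j)) ^ (n + 1 + m + 1))⁻¹) with hg
    have hgm : Measurable g := by
      apply Measurable.ennreal_ofReal
      have m1 : Measurable fun z : ℝ × (Fin n → ℝ) => z.1 ^ p 0 := measurable_fst.pow_const _
      have m2 : Measurable fun z : ℝ × (Fin n → ℝ) => ∏ j, z.2 j ^ p (Fin.succ j) :=
        Finset.measurable_prod _ fun j _ => ((measurable_pi_apply j).comp measurable_snd).pow_const _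
      have m3 : Measurable fun z : ℝ × (Fin n → ℝ) => ∑ j, z.2 j :=
        Finset.measurable_sum _ fun j _ => (measurable_pi_apply j).comp measurable_snd
      exact (m1.mul m2).mul
        (((measurable_const.add (measurable_fst.add m3)).pow_const _).inv)
    have hpre : (Set.univ.pi fun _ : Fin (n + 1) => Ioi (0:ℝ)) = e ⁻¹' ((Ioi (0:ℝ)) ×ˢ S) := by
      ext t
      simp only [Set.mem_pi, Set.mem_univ, true_implies, Set.mem_preimage, Set.mem_prod, he,
        MeasurableEquiv.piFinSuccAbove_apply, Fin.insertNthEquiv_symm_apply, Fin.removeNth_zero,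
        Fin.tail, Fin.zero_succAbove, hS]
      constructor
      · intro h; exact ⟨h 0, fun j => h _⟩
      · rintro ⟨h0, h1⟩ j
        rcases Fin.eq_zero_or_eq_succ j with rfl | ⟨k, rfl⟩
        · exact h0
        · exact h1 k
    have hcomp : ∀ t : Fin (n + 1) → ℝ,
        ENNReal.ofReal ((∏ j, t j ^ p j) * ((1 + ∑ j, t j) ^ (n + 1 + m + 1))⁻¹) = g (e t) := by
      intro t
      simp only [hg, he, MeasurableEquiv.piFinSuccAbove_apply, Fin.insertNthEquiv_symm_apply,
        Fin.removeNth_zero, Fin.tail, Fin.zero_succAbove, Fin.prod_univ_succ, Fin.sum_univ_succ]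
    calc ∫⁻ t in Set.univ.pi fun _ : Fin (n + 1) => Ioi (0:ℝ),
          ENNReal.ofReal ((∏ j, t j ^ p j) * ((1 + ∑ j, t j) ^ (n + 1 + m + 1))⁻¹)
        = ∫⁻ t in e ⁻¹' ((Ioi (0:ℝ)) ×ˢ S), g (e t) := by
          rw [hpre]
          exact setLIntegral_congr_fun (e.measurableSet_preimage.2
            (measurableSet_Ioi.prod (MeasurableSet.univ_pi fun _ => measurableSet_Ioi)))
            (fun t _ => hcomp t)
      _ = ∫⁻ z in (Ioi (0:ℝ)) ×ˢ S, g z := by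
          rw [MeasureTheory.volume_pi]
          exact hmp.setLIntegral_comp_preimage_emb e.measurableEmbedding g _
      _ = ∫⁻ y in S, ∫⁻ x in Ioi (0:ℝ), g (x, y) := by
          rw [MeasureTheory.Measure.volume_eq_prod, ← Measure.prod_restrict]
          exact lintegral_prod_symm g (hgm.aemeasurable)
      _ = ENNReal.ofReal ((∏ j, ((p j).factorial : ℝ)) * ((m - ∑ j, p j).factorial)
            / ((n + 1 + m).factorial)) := by
          have hp0 : p 0 ≤ m := le_trans (Finset.single_le_sum (f := p)
            (fun i _ => Nat.zero_le _) (Finset.mem_univ 0)) hp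
          set m' := m - p 0 with hm'
          set q : Fin n → ℕ := fun j => p (Fin.succ j) with hq
          have hqm : (∑ j, q j) ≤ m' := by
            have : p 0 + ∑ j, q j = ∑ j, p j := (Fin.sum_univ_succ p).symm
            omega
          set K1 : ℝ := (p 0).factorial * (n + m').factorial / (n + m + 1).factorial with hK1
          have hK1nn : 0 ≤ K1 := by positivity
          have hSm : MeasurableSet S := MeasurableSet.univ_pi fun _ => measurableSet_Ioi
          have hstep : ∀ y ∈ S, (∫⁻ x in Ioi (0:ℝ), g (x, y)) =
              ENNReal.ofReal K1 * ENNReal.ofReal ((∏ j, y j ^ q j)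
                * ((1 + ∑ j, y j) ^ (n + m' + 1))⁻¹) := by
            intro y hy
            have hy' : ∀ j, 0 < y j := fun j => (hy j (Set.mem_univ j)).out
            have hsum : 0 ≤ ∑ j, y j := Finset.sum_nonneg fun j _ => (hy' j).le
            set a : ℝ := 1 + ∑ j, y j with ha'
            have ha : (0:ℝ) < a := by rw [ha']; linarith
            set C : ℝ := ∏ j, y j ^ q j with hC'
            have hC : 0 ≤ C := Finset.prod_nonneg fun j _ => pow_nonneg (hy' j).le _
            have hgx : ∀ x : ℝ, g (x, y) =
                ENNReal.ofReal C * ENNReal.ofReal (x ^ p 0 * ((a + x) ^ (n + 1 + m + 1))⁻¹) := by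
              intro x
              simp only [hg]
              rw [← ENNReal.ofReal_mul hC]
              congr 1
              have : 1 + (x + ∑ j, y j) = a + x := by rw [ha']; ring
              rw [this]
              ring
            simp_rw [hgx]
            rw [lintegral_const_mul (ENNReal.ofReal C)
              (Measurable.ennreal_ofReal (by fun_prop))]
            rw [aux_lint1D (p 0) (n + 1 + m + 1) a ha (by omega)]
            rw [show n + 1 + m + 1 - p 0 - 2 = n + m' by omega,
              show n + 1 + m + 1 - 1 = n + m + 1 by omega,
              show n + 1 + m + 1 - p 0 - 1 = n + m' + 1 by omega]
            rw [ENNReal.ofReal_mul hK1nn, ← mul_assoc,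
              mul_comm (ENNReal.ofReal C) (ENNReal.ofReal K1), mul_assoc,
              ← ENNReal.ofReal_mul hC]
          rw [setLIntegral_congr_fun hSm hstep]
          rw [lintegral_const_mul _ (by
            apply Measurable.ennreal_ofReal
            exact (Finset.measurable_prod _ fun j _ => (measurable_pi_apply j).pow_const _).mul
              (((measurable_const.add
                (Finset.measurable_sum _ fun j _ => measurable_pi_apply j)).pow_const _).inv))]
          rw [ih m' q hqm]
          rw [← ENNReal.ofReal_mul hK1nn]
          congr 1
          rw [Fin.prod_univ_succ, Fin.sum_univ_succ]
          have e1 : m' - ∑ j, q j = m - (p 0 + ∑ j, q j) := by omega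
          rw [e1, hK1]
          have h1 : ((n + m').factorial : ℝ) ≠ 0 := by positivity
          have h2 : ((n + m + 1).factorial : ℝ) ≠ 0 := by positivity
          have h3 : (n + 1 + m).factorial = (n + m + 1).factorial := by ring_nf
          rw [h3]
          field_simp
          ring

/-- For every multi-index `p ∈ ℕⁿ` with `|p| ≤ m`,
`∫_{(0,∞)ⁿ} t₁^{p₁} ⋯ tₙ^{pₙ} (1 + t₁ + ⋯ + tₙ)^{-(n+m+1)} dt = p!(m−|p|)!/(n+m)!`. -/
theorem stmt1 (n m : ℕ) (hn : 1 ≤ n) (p : Fin n → ℕ) (hp : ∑ j, p j ≤ m) :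
    ∫ t in Set.univ.pi fun _ : Fin n => Set.Ioi (0 : ℝ),
        (∏ j, t j ^ p j) * ((1 + ∑ j, t j) ^ (n + m + 1))⁻¹ =
      ((∏ j, (p j).factorial) * (m - ∑ j, p j).factorial : ℕ) / ((n + m).factorial : ℝ) := by
  have hSm : MeasurableSet (Set.univ.pi fun _ : Fin n => Ioi (0:ℝ)) :=
    MeasurableSet.univ_pi fun _ => measurableSet_Ioi
  have hnn : 0 ≤ᵐ[volume.restrict (Set.univ.pi fun _ : Fin n => Ioi (0:ℝ))]
      fun t : Fin n → ℝ => (∏ j, t j ^ p j) * ((1 + ∑ j, t j) ^ (n + m + 1))⁻¹ := by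
    rw [EventuallyLE, ae_restrict_iff' hSm]
    refine ae_of_all _ fun t ht => ?_
    have h1 : ∀ j, 0 < t j := fun j => (ht j (Set.mem_univ j)).out
    have h2 : 0 ≤ ∑ j, t j := Finset.sum_nonneg fun j _ => (h1 j).le
    have h3 : (0:ℝ) < 1 + ∑ j, t j := by linarith
    have h4 : 0 ≤ ∏ j, t j ^ p j := Finset.prod_nonneg fun j _ => pow_nonneg (h1 j).le _
    positivity
  have hmeas : AEStronglyMeasurable
      (fun t : Fin n → ℝ => (∏ j, t j ^ p j) * ((1 + ∑ j, t j) ^ (n + m + 1))⁻¹)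
      (volume.restrict (Set.univ.pi fun _ : Fin n => Ioi (0:ℝ))) := by
    apply Measurable.aestronglyMeasurable
    exact (Finset.measurable_prod _ fun j _ => (measurable_pi_apply j).pow_const _).mul
      (((measurable_const.add
        (Finset.measurable_sum _ fun j _ => measurable_pi_apply j)).pow_const _).inv)
  rw [MeasureTheory.integral_eq_lintegral_of_nonneg_ae hnn hmeas, aux_main n m p hp,
    ENNReal.toReal_ofReal (by positivity)]
  push_cast
  ring
end

section
/- For all multi-indices p, q ∈ J_n(m), the inner product of the monomials z^p and z^q in L²(ℂⁿ, ν_m) satisfies ∫_{ℂⁿ} z^p · conj(z)^q dν_m(z) = p! · (m − |p|)! / m! if p = q, and equals 0 if p ≠ q. Consequently, the family { (m!/(p! · (m−|p|)!))^{1/2} · z^p : p ∈ J_n(m) } is orthonormal in L²(ℂⁿ, ν_m). -/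
open MeasureTheory

section Aux

open Set Filter Real Topology
open scoped ENNReal NNReal


lemma radial_base (c : ℝ) (hc : 0 < c) (j : ℕ) :
    IntegrableOn (fun t : ℝ => ((c + t) ^ (j + 2))⁻¹) (Ioi 0) ∧
      ∫ t in Ioi (0:ℝ), ((c + t) ^ (j + 2))⁻¹ = c / ((j + 1) * c ^ (j + 2)) := by
  have hderiv : ∀ x ∈ Ici (0:ℝ),
      HasDerivAt (fun t : ℝ => -((((j:ℝ) + 1) * (c + t) ^ (j + 1))⁻¹))
        (((c + x) ^ (j + 2))⁻¹) x := by
    intro x hx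
    have hx0 : 0 < c + x := by have : (0:ℝ) ≤ x := hx; linarith
    have h1 : HasDerivAt (fun t : ℝ => ((j:ℝ)+1) * (c + t)^(j+1))
        (((j:ℝ)+1) * ((↑(j+1):ℝ) * (c+x)^j * 1)) x :=
      (((hasDerivAt_id x).const_add c).pow (j+1)).const_mul _
    have h2 := (h1.inv (by positivity)).neg
    refine h2.congr_deriv ?_
    push_cast
    field_simp
    ring
  have hpos : ∀ x ∈ Ioi (0:ℝ), (0:ℝ) ≤ ((c + x) ^ (j + 2))⁻¹ := by
    intro x hx
    have : (0:ℝ) < c + x := by have := mem_Ioi.mp hx; linarith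
    positivity
  have htend : Tendsto (fun t : ℝ => -((((j:ℝ) + 1) * (c + t) ^ (j + 1))⁻¹)) atTop (𝓝 0) := by
    rw [show (0:ℝ) = -0 by ring]
    apply Tendsto.neg
    apply Tendsto.comp tendsto_inv_atTop_zero
    apply Tendsto.const_mul_atTop (by positivity)
    exact (tendsto_pow_atTop (by omega)).comp (tendsto_atTop_add_const_left _ c tendsto_id)
  constructor
  · exact integrableOn_Ioi_deriv_of_nonneg' hderiv hpos htend
  · rw [integral_Ioi_of_hasDerivAt_of_nonneg' hderiv hpos htend]
    simp only [add_zero]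
    field_simp
    ring

lemma radial_main (p : ℕ) : ∀ (j : ℕ) (c : ℝ), 0 < c →
    IntegrableOn (fun t : ℝ => t ^ p * ((c + t) ^ (p + j + 2))⁻¹) (Ioi 0) ∧
      ∫ t in Ioi (0:ℝ), t ^ p * ((c + t) ^ (p + j + 2))⁻¹ =
        (p.factorial * j.factorial / (p + j + 1).factorial) * (c ^ (p + 1) / c ^ (p + j + 2)) := by
  induction p with
  | zero =>
    intro j c hc
    obtain ⟨h1, h2⟩ := radial_base c hc j
    constructor
    · simpa using h1
    · simp only [pow_zero, one_mul, zero_add, h2, Nat.factorial_zero, Nat.factorial_succ]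
      have hj : (j.factorial : ℝ) ≠ 0 := by positivity
      push_cast
      field_simp
  | succ p IH =>
    intro j c hc
    obtain ⟨hA, vA⟩ := IH j c hc
    obtain ⟨hB, vB⟩ := IH (j+1) c hc
    have hkey : ∀ t ∈ Ioi (0:ℝ),
        t ^ (p+1) * ((c + t) ^ (p + 1 + j + 2))⁻¹ =
          t ^ p * ((c + t) ^ (p + j + 2))⁻¹ - c * (t ^ p * ((c + t) ^ (p + (j+1) + 2))⁻¹) := by
      intro t ht
      have h0 : (0:ℝ) < c + t := by have := mem_Ioi.mp ht; linarith
      have e1 : p + 1 + j + 2 = p + (j+1) + 2 := by omega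
      rw [e1]
      field_simp
      ring
    constructor
    · exact IntegrableOn.congr_fun (hA.sub (hB.const_mul c)) (fun t ht => (hkey t ht).symm) measurableSet_Ioi
    · rw [setIntegral_congr_fun measurableSet_Ioi hkey, integral_sub hA (hB.const_mul c),
        integral_const_mul, vA, vB]
      have e2 : p + (j+1) + 1 = p + j + 2 := by omega
      have e3 : p + (j+1) + 2 = p + 1 + j + 2 := by omega
      rw [e2, e3]
      have f1 : ((p+1).factorial : ℝ) = (p+1) * p.factorial := by
        rw [Nat.factorial_succ]; push_cast; ring
      have f2 : ((j+1).factorial : ℝ) = (j+1) * j.factorial := by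
        rw [Nat.factorial_succ]; push_cast; ring
      have f3 : ((p+j+2).factorial : ℝ) = (p+j+2) * (p+j+1).factorial := by
        rw [show p+j+2 = (p+j+1)+1 by omega, Nat.factorial_succ]; push_cast; ring
      have f4 : p + 1 + j + 1 = p + j + 2 := by omega
      rw [f4, f1, f2, f3]
      have hfac : ((p+j+1).factorial : ℝ) ≠ 0 := by positivity
      field_simp
      ring

lemma thetaInt (k : ℤ) :
    ∫ θ in Ioo (-Real.pi) Real.pi, Complex.exp (k * θ * Complex.I) =
      if k = 0 then ((2 * Real.pi : ℝ) : ℂ) else 0 := by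
  rcases eq_or_ne k 0 with rfl | hk
  · simp only [Int.cast_zero, zero_mul, Complex.exp_zero, if_pos rfl]
    rw [setIntegral_const, Real.volume_real_Ioo_of_le (by linarith [Real.pi_pos])]
    push_cast
    simp [smul_eq_mul]
    ring
  · rw [if_neg hk, ← integral_Ioc_eq_integral_Ioo,
      ← intervalIntegral.integral_of_le (by linarith [Real.pi_pos])]
    have : ∀ θ : ℝ, Complex.exp (k * θ * Complex.I) = Complex.exp ((k * Complex.I) * θ) := by
      intro θ; ring_nf
    simp_rw [this]
    rw [integral_exp_mul_complex (by simp [hk, Complex.ext_iff])]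
    have : Complex.exp ((k : ℂ) * Complex.I * (Real.pi : ℂ)) =
        Complex.exp ((k : ℂ) * Complex.I * ((-Real.pi : ℝ) : ℂ)) := by
      rw [Complex.exp_eq_exp_iff_exists_int]
      exact ⟨k, by push_cast; ring⟩
    rw [this, sub_self, zero_div]

lemma lemA (p q N : ℕ) (hp : p + 2 ≤ N) (hq : q + 2 ≤ N) {c : ℝ} (hc : 0 < c) :
    ∫ z : ℂ, z ^ p * (starRingEnd ℂ) z ^ q * ((((c + ‖z‖ ^ 2) ^ N)⁻¹ : ℝ) : ℂ) =
      if p = q then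
        (((Real.pi * p.factorial * (N - p - 2).factorial / (N - 1).factorial) *
          (c ^ (p + 1) / c ^ N) : ℝ) : ℂ)
      else 0 := by
  rw [← Complex.integral_comp_polarCoord_symm]
  have hT : polarCoord.target = Ioi (0:ℝ) ×ˢ Ioo (-Real.pi) Real.pi := rfl
  have hmeas : MeasurableSet (Ioi (0:ℝ) ×ˢ Ioo (-Real.pi) Real.pi) :=
    measurableSet_Ioi.prod measurableSet_Ioo
  have hcongr : ∀ x ∈ Ioi (0:ℝ) ×ˢ Ioo (-Real.pi) Real.pi,
      x.1 • ((Complex.polarCoord.symm x) ^ p *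
          (starRingEnd ℂ) (Complex.polarCoord.symm x) ^ q *
          ((((c + ‖Complex.polarCoord.symm x‖ ^ 2) ^ N)⁻¹ : ℝ) : ℂ)) =
        (((x.1 ^ (p + q + 1) * ((c + x.1 ^ 2) ^ N)⁻¹ : ℝ)) : ℂ) *
          Complex.exp ((((p : ℤ) - q : ℤ) : ℂ) * x.2 * Complex.I) := by
    rintro ⟨r, θ⟩ ⟨hr, hθ⟩
    dsimp only
    have hr0 : (0:ℝ) < r := hr
    have hz : Complex.polarCoord.symm (r, θ) = (r : ℂ) * Complex.exp (θ * Complex.I) := by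
      rw [Complex.polarCoord_symm_apply, Complex.exp_mul_I]
      push_cast
      ring
    rw [hz]
    have habs : ‖(r : ℂ) * Complex.exp (θ * Complex.I)‖ = r := by
      simp [Complex.norm_exp, abs_of_pos hr0]
    have hconj : (starRingEnd ℂ) ((r : ℂ) * Complex.exp (θ * Complex.I)) =
        (r : ℂ) * Complex.exp (-(θ * Complex.I)) := by
      rw [map_mul, Complex.conj_ofReal, ← Complex.exp_conj]
      congr 1
      simp [Complex.ext_iff]
    rw [habs, hconj, mul_pow, mul_pow, ← Complex.exp_nat_mul, ← Complex.exp_nat_mul, Complex.real_smul]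
    push_cast
    rw [show ((p:ℂ) - q) * θ * Complex.I =
      (p:ℂ) * (θ * Complex.I) + (q:ℂ) * -(θ * Complex.I) by ring, Complex.exp_add]
    ring
  rw [hT, setIntegral_congr_fun hmeas hcongr]
  rw [Measure.volume_eq_prod, ← Measure.prod_restrict,
    integral_prod_mul (fun a : ℝ => ((a ^ (p + q + 1) * ((c + a ^ 2) ^ N)⁻¹ : ℝ) : ℂ))
      (fun b : ℝ => Complex.exp ((((p : ℤ) - q : ℤ) : ℂ) * b * Complex.I)), thetaInt]
  -- radial part
  rcases eq_or_ne p q with rfl | hpq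
  · rw [if_pos (sub_self (p:ℤ)), if_pos rfl]
    have hrealInt : ∫ r in Ioi (0:ℝ),
        r ^ (p + p + 1) * ((c + r ^ 2) ^ N)⁻¹ =
        2⁻¹ * ((p.factorial * (N - p - 2).factorial / (N - 1).factorial) *
          (c ^ (p + 1) / c ^ N)) := by
      have hsub := integral_comp_rpow_Ioi_of_pos
        (g := fun t => t ^ p * ((c + t) ^ N)⁻¹) (p := 2) two_pos
      have : ∀ x ∈ Ioi (0:ℝ), ((2:ℝ) * x ^ ((2:ℝ) - 1)) •
          ((x ^ (2:ℝ)) ^ p * ((c + x ^ (2:ℝ)) ^ N)⁻¹) =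
          2 * (x ^ (p + p + 1) * ((c + x ^ 2) ^ N)⁻¹) := by
        intro x hx
        have hx0 : (0:ℝ) < x := hx
        rw [show ((2:ℝ) - 1) = 1 by norm_num, Real.rpow_one,
          show x ^ (2:ℝ) = x ^ (2:ℕ) by rw [← Real.rpow_natCast]; norm_num]
        rw [smul_eq_mul, ← pow_mul]
        ring
      rw [setIntegral_congr_fun measurableSet_Ioi this] at hsub
      rw [integral_const_mul] at hsub
      obtain ⟨j, hj⟩ : ∃ j, N = p + j + 2 := ⟨N - p - 2, by omega⟩
      subst hj
      rw [(radial_main p j c hc).2] at hsub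
      rw [show p + j + 2 - p - 2 = j by omega, show p + j + 2 - 1 = p + j + 1 by omega]
      linarith [hsub]
    have hrad : ∫ r in Ioi (0:ℝ),
        ((r ^ (p + p + 1) * ((c + r ^ 2) ^ N)⁻¹ : ℝ) : ℂ) =
        ((2⁻¹ * ((p.factorial * (N - p - 2).factorial / (N - 1).factorial) *
          (c ^ (p + 1) / c ^ N)) : ℝ) : ℂ) := by
      have h2 := integral_ofReal (𝕜 := ℂ)
        (f := fun r : ℝ => r ^ (p + p + 1) * ((c + r ^ 2) ^ N)⁻¹)
        (μ := volume.restrict (Ioi 0))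
      exact h2.trans (by rw [hrealInt]; rfl)
    rw [hrad]
    push_cast
    ring
  · have hne : ((p:ℤ) - q) ≠ 0 := sub_ne_zero.mpr (by exact_mod_cast hpq)
    rw [if_neg hne, if_neg hpq, mul_zero]

lemma realBound {A S w c : ℝ} (hA0 : 0 ≤ A) (hS0 : 0 ≤ S) (hw : 0 ≤ w) (hwS : w ≤ S)
    (a n N : ℕ) (hAsq : A ^ 2 ≤ (1 + S) ^ a) (ha : a + 2 * n + 2 ≤ 2 * N) (hc : 0 < c) :
    A * ((c + S) ^ N)⁻¹ ≤ ((min c 1) ^ N)⁻¹ * ((1 + w) ^ (n + 1))⁻¹ := by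
  have h1S : (0:ℝ) < 1 + S := by linarith
  have h1w : (0:ℝ) < 1 + w := by linarith
  have hcS : (0:ℝ) < c + S := by linarith
  have hm : (0:ℝ) < min c 1 := lt_min hc one_pos
  have hkey : A * (1 + w) ^ (n + 1) ≤ (1 + S) ^ N := by
    have h2 : (A * (1 + w) ^ (n + 1)) ^ 2 ≤ ((1 + S) ^ N) ^ 2 := by
      calc (A * (1 + w) ^ (n + 1)) ^ 2 = A ^ 2 * (1 + w) ^ (2 * n + 2) := by ring
      _ ≤ (1 + S) ^ a * (1 + S) ^ (2 * n + 2) :=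
          mul_le_mul hAsq (pow_le_pow_left₀ h1w.le (by linarith) _)
            (pow_nonneg h1w.le _) (pow_nonneg h1S.le _)
      _ = (1 + S) ^ (a + (2 * n + 2)) := (pow_add _ _ _).symm
      _ ≤ (1 + S) ^ (2 * N) := pow_le_pow_right₀ (by linarith) (by omega)
      _ = ((1 + S) ^ N) ^ 2 := by rw [← pow_mul, mul_comm]
    exact (pow_le_pow_iff_left₀ (by positivity) (by positivity) two_ne_zero).mp h2
  have hcs : min c 1 * (1 + S) ≤ c + S := by
    have h1 : min c 1 ≤ c := min_le_left _ _
    have h2 : min c 1 ≤ 1 := min_le_right _ _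
    nlinarith
  have hinv1 : ((c + S) ^ N)⁻¹ ≤ ((min c 1) ^ N)⁻¹ * ((1 + S) ^ N)⁻¹ := by
    rw [← mul_inv, ← mul_pow]
    exact inv_anti₀ (by positivity) (pow_le_pow_left₀ (by positivity) hcs N)
  have hA' : A ≤ (1 + S) ^ N * ((1 + w) ^ (n + 1))⁻¹ := by
    have h3 := mul_le_mul_of_nonneg_right hkey
      (inv_nonneg.mpr (pow_nonneg h1w.le (n + 1)))
    rwa [mul_assoc, mul_inv_cancel₀ (by positivity), mul_one] at h3
  calc A * ((c + S) ^ N)⁻¹ ≤ A * (((min c 1) ^ N)⁻¹ * ((1 + S) ^ N)⁻¹) :=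
        mul_le_mul_of_nonneg_left hinv1 hA0
    _ ≤ ((1 + S) ^ N * ((1 + w) ^ (n + 1))⁻¹) * (((min c 1) ^ N)⁻¹ * ((1 + S) ^ N)⁻¹) :=
        mul_le_mul_of_nonneg_right hA' (by positivity)
    _ = ((min c 1) ^ N)⁻¹ * ((1 + w) ^ (n + 1))⁻¹ * ((1 + S) ^ N * ((1 + S) ^ N)⁻¹) := by ring
    _ = ((min c 1) ^ N)⁻¹ * ((1 + w) ^ (n + 1))⁻¹ := by
        rw [mul_inv_cancel₀ (by positivity), mul_one]

lemma lemInt (n N : ℕ) (p q : Fin n → ℕ) (c : ℝ) (hc : 0 < c)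
    (h : ∑ j, p j + ∑ j, q j + 2 * n + 2 ≤ 2 * N) :
    Integrable (fun z : Fin n → ℂ =>
      (∏ j, z j ^ p j) * (∏ j, (starRingEnd ℂ) (z j) ^ q j) *
        ((((c + ∑ j, ‖z j‖ ^ 2) ^ N)⁻¹ : ℝ) : ℂ)) := by
  have hSpos : ∀ z : Fin n → ℂ, 0 < c + ∑ j, ‖z j‖ ^ 2 := by
    intro z
    have : 0 ≤ ∑ j, ‖z j‖ ^ 2 := Finset.sum_nonneg fun j _ => by positivity
    linarith
  have hcontS : Continuous fun z : Fin n → ℂ => c + ∑ j, ‖z j‖ ^ 2 := by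
    apply continuous_const.add
    exact continuous_finset_sum _ fun j _ =>
      ((continuous_norm.comp (continuous_apply j)).pow 2)
  have hcont : Continuous (fun z : Fin n → ℂ =>
      (∏ j, z j ^ p j) * (∏ j, (starRingEnd ℂ) (z j) ^ q j) *
        ((((c + ∑ j, ‖z j‖ ^ 2) ^ N)⁻¹ : ℝ) : ℂ)) := by
    apply Continuous.mul
    · apply Continuous.mul
      · exact continuous_finset_prod _ fun j _ => (continuous_apply j).pow _
      · exact continuous_finset_prod _ fun j _ =>
          ((Complex.continuous_conj.comp (continuous_apply j)).pow _)
    · exact Complex.continuous_ofReal.comp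
        (((hcontS.pow N).inv₀ (fun z => (pow_ne_zero _ (hSpos z).ne'))))
  have hminpos : 0 < min c 1 := lt_min hc one_pos
  have hint : Integrable (fun z : Fin n → ℂ =>
      ((min c 1) ^ N)⁻¹ * (((1 + ‖z‖ ^ 2) ^ (n + 1) : ℝ))⁻¹) := by
    have hfr : (Module.finrank ℝ (Fin n → ℂ) : ℝ) < 2 * (n + 1) := by
      simp only [Module.finrank_pi_fintype, Complex.finrank_real_complex,
        Finset.sum_const, Finset.card_univ, Fintype.card_fin, smul_eq_mul]
      push_cast
      linarith
    have h0 := (integrable_rpow_neg_one_add_norm_sq (E := Fin n → ℂ)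
      (μ := volume) (r := 2 * (n + 1)) hfr).const_mul (((min c 1) ^ N)⁻¹)
    refine h0.congr (Eventually.of_forall fun z => ?_)
    dsimp only
    congr 1
    have h1 : (0:ℝ) < 1 + ‖z‖ ^ 2 := by positivity
    rw [show -(2 * ((n:ℝ) + 1)) / 2 = -((n:ℝ) + 1) by ring, Real.rpow_neg h1.le,
      show ((n:ℝ) + 1) = ((n + 1 : ℕ) : ℝ) by push_cast; ring, Real.rpow_natCast]
  refine hint.mono' hcont.aestronglyMeasurable (Eventually.of_forall fun z => ?_)
  have hS0 : 0 ≤ ∑ j, ‖z j‖ ^ 2 := Finset.sum_nonneg fun j _ => by positivity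
  have hnorm : ‖(∏ j, z j ^ p j) * (∏ j, (starRingEnd ℂ) (z j) ^ q j) *
      ((((c + ∑ j, ‖z j‖ ^ 2) ^ N)⁻¹ : ℝ) : ℂ)‖ =
      (∏ j, ‖z j‖ ^ (p j + q j)) *
        ((c + ∑ j, ‖z j‖ ^ 2) ^ N)⁻¹ := by
    rw [norm_mul, norm_mul, norm_prod, norm_prod, Complex.norm_real, Real.norm_eq_abs,
      abs_of_nonneg (by positivity : (0:ℝ) ≤ ((c + ∑ j, ‖z j‖ ^ 2) ^ N)⁻¹)]
    simp_rw [norm_pow, Complex.norm_conj, pow_add,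
      Finset.prod_mul_distrib]
  rw [hnorm]
  have hsq' : ∀ j, ‖z j‖ ^ 2 ≤ ∑ j, ‖z j‖ ^ 2 := fun j =>
    Finset.single_le_sum (f := fun j => ‖z j‖ ^ 2)
      (fun i _ => by positivity) (Finset.mem_univ j)
  have hA0 : 0 ≤ ∏ j, ‖z j‖ ^ (p j + q j) :=
    Finset.prod_nonneg fun j _ => by positivity
  have hAsq : (∏ j, ‖z j‖ ^ (p j + q j)) ^ 2 ≤
      (1 + ∑ j, ‖z j‖ ^ 2) ^ (∑ j, p j + ∑ j, q j) := by
    rw [← Finset.prod_pow, show ∑ j, p j + ∑ j, q j = ∑ j, (p j + q j) from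
      Finset.sum_add_distrib.symm, ← Finset.prod_pow_eq_pow_sum]
    apply Finset.prod_le_prod (fun j _ => by positivity)
    intro j _
    rw [← pow_mul, mul_comm (p j + q j) 2, pow_mul]
    exact pow_le_pow_left₀ (by positivity) (by linarith [hsq' j]) _
  have hzS : ‖z‖ ^ 2 ≤ ∑ j, ‖z j‖ ^ 2 := by
    have hns : ‖z‖ ≤ Real.sqrt (∑ j, ‖z j‖ ^ 2) := by
      rw [pi_norm_le_iff_of_nonneg (Real.sqrt_nonneg _)]
      intro i
      rw [← Real.sqrt_sq (norm_nonneg (z i))]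
      apply Real.sqrt_le_sqrt
      simpa using hsq' i
    calc ‖z‖ ^ 2 ≤ Real.sqrt (∑ j, ‖z j‖ ^ 2) ^ 2 :=
          pow_le_pow_left₀ (norm_nonneg z) hns 2
    _ = ∑ j, ‖z j‖ ^ 2 := Real.sq_sqrt hS0
  exact realBound hA0 hS0 (by positivity) hzS _ n N hAsq (by omega) hc

lemma lemB : ∀ (n N : ℕ) (p q : Fin n → ℕ) (c : ℝ), 0 < c →
    (∑ j, p j) + n + 1 ≤ N → (∑ j, q j) + n + 1 ≤ N →
    ∫ z : Fin n → ℂ, (∏ j, z j ^ p j) * (∏ j, (starRingEnd ℂ) (z j) ^ q j) *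
        ((((c + ∑ j, ‖z j‖ ^ 2) ^ N)⁻¹ : ℝ) : ℂ) =
      if p = q then
        (((Real.pi ^ n * (∏ j, (p j).factorial) * (N - (∑ j, p j) - n - 1).factorial /
          (N - 1).factorial) * (c ^ ((∑ j, p j) + n) / c ^ N) : ℝ) : ℂ)
      else 0 := by
  intro n
  induction n with
  | zero =>
    intro N p q c hc hp hq
    have hpq : p = q := Subsingleton.elim _ _
    rw [if_pos hpq]
    simp only [Finset.univ_eq_empty, Finset.prod_empty, Finset.sum_empty, one_mul, mul_one,
      add_zero]
    rw [integral_const, volume_pi, measureReal_def, Measure.pi_univ]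
    simp only [Finset.univ_eq_empty, Finset.prod_empty, ENNReal.toReal_one, one_smul]
    norm_num
    rw [div_self (by exact_mod_cast Nat.factorial_ne_zero (N-1)), one_mul]
  | succ n IH =>
    intro N p q c hc hp hq
    set e := MeasurableEquiv.piFinSuccAbove (fun _ : Fin (n+1) => ℂ) 0 with he
    have hmp := MeasureTheory.volume_preserving_piFinSuccAbove (fun _ : Fin (n+1) => ℂ) 0
    set F := fun z : Fin (n+1) → ℂ => (∏ j, z j ^ p j) * (∏ j, (starRingEnd ℂ) (z j) ^ q j) *
        ((((c + ∑ j, ‖z j‖ ^ 2) ^ N)⁻¹ : ℝ) : ℂ) with hF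
    have hstep : ∫ z : Fin (n+1) → ℂ, F z = ∫ w : ℂ × (Fin n → ℂ), F (e.symm w) :=
      ((MeasurePreserving.symm e hmp).integral_comp e.symm.measurableEmbedding F).symm
    have hcomp : ∀ w : ℂ × (Fin n → ℂ), F (e.symm w) =
        (w.1 ^ p 0 * (starRingEnd ℂ) w.1 ^ q 0) *
          ((∏ i, w.2 i ^ p (Fin.succ i)) *
            (∏ i, (starRingEnd ℂ) (w.2 i) ^ q (Fin.succ i)) *
            (((((c + ‖w.1‖ ^ 2) + ∑ i, ‖w.2 i‖ ^ 2) ^ N)⁻¹ : ℝ) : ℂ)) := by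
      intro w
      have h1 : e.symm w = Fin.cons w.1 w.2 := by
        simp [he, MeasurableEquiv.piFinSuccAbove_symm_apply, Fin.insertNthEquiv,
          Fin.insertNth_zero]
      rw [hF, h1]
      simp only [Fin.prod_univ_succ, Fin.sum_univ_succ, Fin.cons_zero, Fin.cons_succ]
      rw [← add_assoc]
      ring
    set G := fun (x : ℂ) (y : Fin n → ℂ) =>
        (x ^ p 0 * (starRingEnd ℂ) x ^ q 0) *
          ((∏ i, y i ^ p (Fin.succ i)) * (∏ i, (starRingEnd ℂ) (y i) ^ q (Fin.succ i)) *
            (((((c + ‖x‖ ^ 2) + ∑ i, ‖y i‖ ^ 2) ^ N)⁻¹ : ℝ) : ℂ)) with hG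
    have hsum_p : ∑ j, p j = p 0 + ∑ i, p (Fin.succ i) := Fin.sum_univ_succ p
    have hsum_q : ∑ j, q j = q 0 + ∑ i, q (Fin.succ i) := Fin.sum_univ_succ q
    have hIntF : Integrable F := by
      apply lemInt (n+1) N p q c hc
      omega
    have hInt2 : Integrable (fun w : ℂ × (Fin n → ℂ) => G w.1 w.2)
        ((volume : Measure ℂ).prod (volume : Measure (Fin n → ℂ))) := by
      have h2 := ((MeasurePreserving.symm e hmp).integrable_comp_emb
        e.symm.measurableEmbedding).mpr hIntF
      rw [Measure.volume_eq_prod] at h2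
      exact h2.congr (Eventually.of_forall fun w => by
        rw [Function.comp_apply, hcomp w])
    have hstep2 : ∫ w : ℂ × (Fin n → ℂ), F (e.symm w) = ∫ x : ℂ, ∫ y : Fin n → ℂ, G x y := by
      rw [MeasureTheory.integral_integral hInt2, Measure.volume_eq_prod]
      exact integral_congr_ae (Eventually.of_forall fun w => hcomp w)
    rw [hstep, hstep2]
    by_cases htail : (fun i => p (Fin.succ i)) = (fun i => q (Fin.succ i))
    · -- tails agree
      have hstl : ∑ i, q (Fin.succ i) = ∑ i, p (Fin.succ i) := by
        rw [show (fun i => q (Fin.succ i)) = (fun i => p (Fin.succ i)) from htail.symm]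
      obtain ⟨a, N', hN'eq, hN'⟩ : ∃ a N', N' = p 0 + 2 + a ∧
          N = N' + ((∑ i, p (Fin.succ i)) + n) := ⟨N - (∑ i, p (Fin.succ i)) - n - p 0 - 2,
            N - ((∑ i, p (Fin.succ i)) + n), by omega, by omega⟩
      have hq0 : q 0 + 2 ≤ N' := by omega
      have hinner : ∀ x : ℂ, (∫ y : Fin n → ℂ, G x y) =
          ((Real.pi ^ n * (∏ i, (p (Fin.succ i)).factorial) * (N' - 1).factorial /
            (N - 1).factorial : ℝ) : ℂ) *
            (x ^ p 0 * (starRingEnd ℂ) x ^ q 0 *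
              ((((c + ‖x‖ ^ 2) ^ N')⁻¹ : ℝ) : ℂ)) := by
        intro x
        have hcx : 0 < c + ‖x‖ ^ 2 := by positivity
        have hIH := IH N (fun i => p (Fin.succ i)) (fun i => q (Fin.succ i))
          (c + ‖x‖ ^ 2) hcx
          (show ∑ i, p (Fin.succ i) + n + 1 ≤ N by omega)
          (show ∑ i, q (Fin.succ i) + n + 1 ≤ N by omega)
        rw [if_pos htail] at hIH
        rw [hG]
        dsimp only
        rw [integral_const_mul, hIH]
        have hpow : (c + ‖x‖ ^ 2) ^ ((∑ i, p (Fin.succ i)) + n) /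
            (c + ‖x‖ ^ 2) ^ N = ((c + ‖x‖ ^ 2) ^ N')⁻¹ := by
          rw [hN', pow_add]
          field_simp
          rw [pow_add, pow_add]
          ring
        rw [hpow]
        have hfac : N - (∑ i, p (Fin.succ i)) - n - 1 = N' - 1 := by omega
        rw [hfac]
        push_cast
        ring
      rw [show (fun x : ℂ => ∫ y : Fin n → ℂ, G x y) = fun x : ℂ =>
          ((Real.pi ^ n * (∏ i, (p (Fin.succ i)).factorial) * (N' - 1).factorial /
            (N - 1).factorial : ℝ) : ℂ) *
            (x ^ p 0 * (starRingEnd ℂ) x ^ q 0 *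
              ((((c + ‖x‖ ^ 2) ^ N')⁻¹ : ℝ) : ℂ)) from funext hinner]
      rw [integral_const_mul, lemA (p 0) (q 0) N' (by omega) hq0 hc]
      rcases eq_or_ne (p 0) (q 0) with h00 | h00
      · have hpq : p = q := by
          funext j
          rcases Fin.eq_zero_or_eq_succ j with rfl | ⟨i, rfl⟩
          · exact h00
          · exact congrFun htail i
        rw [if_pos h00, if_pos hpq]
        rw [← Complex.ofReal_mul]
        congr 1
        have e1 : N' - p 0 - 2 = a := by omega
        rw [hsum_p]
        have e2 : N - (p 0 + ∑ i, p (Fin.succ i)) - (n + 1) - 1 = a := by omega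
        have e3 : N' - 1 = p 0 + 1 + a := by omega
        have e4 : N - 1 = p 0 + 1 + a + ((∑ i, p (Fin.succ i)) + n) := by omega
        have e5 : ∏ j, (p j).factorial = (p 0).factorial * ∏ i, (p (Fin.succ i)).factorial :=
          Fin.prod_univ_succ _
        rw [e1, e2, e3, e4, e5, hN', hN'eq]
        have hfa : ∀ k : ℕ, ((k.factorial : ℝ)) ≠ 0 := fun k => by
          exact_mod_cast Nat.factorial_ne_zero k
        field_simp
        push_cast
        ring
      · rw [if_neg h00, if_neg (by
          intro hpq
          exact h00 (congrFun hpq 0)), mul_zero]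
    · -- tails differ
      have hinner0 : ∀ x : ℂ, (∫ y : Fin n → ℂ, G x y) = 0 := by
        intro x
        have hcx : 0 < c + ‖x‖ ^ 2 := by positivity
        have hIH := IH N (fun i => p (Fin.succ i)) (fun i => q (Fin.succ i))
          (c + ‖x‖ ^ 2) hcx
          (show ∑ i, p (Fin.succ i) + n + 1 ≤ N by omega)
          (show ∑ i, q (Fin.succ i) + n + 1 ≤ N by omega)
        rw [if_neg htail] at hIH
        rw [hG]
        dsimp only
        rw [integral_const_mul, hIH, mul_zero]
      rw [show (fun x : ℂ => ∫ y : Fin n → ℂ, G x y) = fun _ : ℂ => (0:ℂ) from funext hinner0,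
        integral_zero, if_neg (by
          intro hpq
          exact htail (funext fun i => congrFun hpq i.succ))]

end Aux

open scoped ENNReal NNReal

/-- The weighted measure `ν_m` on `ℂⁿ`. -/
noncomputable def nu (n m : ℕ) : Measure (Fin n → ℂ) :=
  volume.withDensity fun z =>
    ENNReal.ofReal (((n + m).factorial : ℝ) / (Real.pi ^ n * m.factorial) *
      ((1 + ∑ j, ‖z j‖ ^ 2) ^ (n + m + 1))⁻¹)

/-- For `p, q ∈ J_n(m)`, `∫ z^p conj(z)^q dν_m = p!(m−|p|)!/m!` if `p = q` and `0` otherwise;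
consequently the normalized monomials `(m!/(p!(m−|p|)!))^{1/2} z^p` form an orthonormal family
in `L²(ℂⁿ, ν_m)`. -/
theorem stmt2 (n m : ℕ) (hn : 1 ≤ n) (p q : Fin n → ℕ)
    (hp : ∑ j, p j ≤ m) (hq : ∑ j, q j ≤ m) :
    (∫ z : Fin n → ℂ, (∏ j, z j ^ p j) * (∏ j, (starRingEnd ℂ) (z j) ^ q j) ∂(nu n m)) =
      (if p = q then
        (((∏ j, (p j).factorial) * (m - ∑ j, p j).factorial : ℕ) : ℂ) / (m.factorial : ℂ)
      else 0) ∧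
    (∫ z : Fin n → ℂ,
        ((Real.sqrt ((m.factorial : ℝ) /
            ((∏ j, (p j).factorial) * (m - ∑ j, p j).factorial)) : ℂ) * ∏ j, z j ^ p j) *
          (starRingEnd ℂ) ((Real.sqrt ((m.factorial : ℝ) /
            ((∏ j, (q j).factorial) * (m - ∑ j, q j).factorial)) : ℂ) * ∏ j, z j ^ q j)
        ∂(nu n m)) = if p = q then 1 else 0 := by
  set C : ℝ := ((n + m).factorial : ℝ) / (Real.pi ^ n * m.factorial) with hC
  have hpi : (0:ℝ) < Real.pi ^ n := pow_pos Real.pi_pos n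
  have hCpos : 0 < C := by
    rw [hC]
    apply div_pos
    · exact_mod_cast Nat.factorial_pos _
    · apply mul_pos hpi
      exact_mod_cast Nat.factorial_pos m
  have hSpos : ∀ z : Fin n → ℂ, (0:ℝ) < 1 + ∑ j, ‖z j‖ ^ 2 := by
    intro z
    have : 0 ≤ ∑ j, ‖z j‖ ^ 2 := Finset.sum_nonneg fun j _ => by positivity
    linarith
  set d : (Fin n → ℂ) → ℝ := fun z =>
    C * ((1 + ∑ j, ‖z j‖ ^ 2) ^ (n + m + 1))⁻¹ with hd
  have hd0 : ∀ z, 0 ≤ d z := fun z => by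
    have := hSpos z
    rw [hd]
    positivity
  have hdmeas : Measurable fun z : Fin n → ℂ => (d z).toNNReal := by
    apply Measurable.real_toNNReal
    apply Measurable.const_mul
    apply Measurable.inv
    apply Measurable.pow_const
    apply Measurable.const_add
    exact Finset.measurable_sum _ fun j _ =>
      (continuous_norm.measurable.comp (measurable_pi_apply j)).pow_const 2
  have hnu : ∀ g : (Fin n → ℂ) → ℂ, ∫ z, g z ∂(nu n m) = ∫ z, (d z).toNNReal • g z := by
    intro g
    rw [show nu n m = volume.withDensity (fun z => ((d z).toNNReal : ℝ≥0∞)) from rfl]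
    exact integral_withDensity_eq_integral_smul hdmeas g
  have key : ∀ (p' q' : Fin n → ℕ), (∑ j, p' j ≤ m) → (∑ j, q' j ≤ m) →
      (∫ z : Fin n → ℂ, (∏ j, z j ^ p' j) * (∏ j, (starRingEnd ℂ) (z j) ^ q' j) ∂(nu n m)) =
      (if p' = q' then
        (((∏ j, (p' j).factorial) * (m - ∑ j, p' j).factorial : ℕ) : ℂ) / (m.factorial : ℂ)
      else 0) := by
    intro p' q' hp' hq'
    rw [hnu]
    have hcongr : ∀ z : Fin n → ℂ, (d z).toNNReal •
        ((∏ j, z j ^ p' j) * (∏ j, (starRingEnd ℂ) (z j) ^ q' j)) =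
        (C : ℂ) * ((∏ j, z j ^ p' j) * (∏ j, (starRingEnd ℂ) (z j) ^ q' j) *
          (((((1:ℝ) + ∑ j, ‖z j‖ ^ 2) ^ (n + m + 1))⁻¹ : ℝ) : ℂ)) := by
      intro z
      rw [NNReal.smul_def, Real.coe_toNNReal _ (hd0 z), Complex.real_smul, hd]
      push_cast
      ring
    rw [show (fun z : Fin n → ℂ => (d z).toNNReal •
        ((∏ j, z j ^ p' j) * (∏ j, (starRingEnd ℂ) (z j) ^ q' j))) = fun z : Fin n → ℂ =>
        (C : ℂ) * ((∏ j, z j ^ p' j) * (∏ j, (starRingEnd ℂ) (z j) ^ q' j) *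
          (((((1:ℝ) + ∑ j, ‖z j‖ ^ 2) ^ (n + m + 1))⁻¹ : ℝ) : ℂ)) from
      funext hcongr, integral_const_mul,
      lemB n (n + m + 1) p' q' 1 one_pos (by omega) (by omega)]
    rcases eq_or_ne p' q' with rfl | hne
    · rw [if_pos rfl, if_pos rfl, ← Complex.ofReal_natCast, ← Complex.ofReal_natCast,
        ← Complex.ofReal_div, ← Complex.ofReal_mul]
      congr 1
      rw [one_pow, one_pow, div_one, mul_one,
        show n + m + 1 - (∑ j, p' j) - n - 1 = m - ∑ j, p' j by omega,
        show n + m + 1 - 1 = n + m by omega]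
      have h1 : (Real.pi : ℝ) ^ n ≠ 0 := ne_of_gt hpi
      have h2 : ((m.factorial : ℝ)) ≠ 0 := by exact_mod_cast Nat.factorial_ne_zero m
      have h3 : (((n + m).factorial : ℝ)) ≠ 0 := by exact_mod_cast Nat.factorial_ne_zero _
      rw [hC]
      push_cast
      field_simp
    · rw [if_neg hne, if_neg hne, mul_zero]
  have part1 := key p q hp hq
  refine ⟨part1, ?_⟩
  set Ap : ℝ := (m.factorial : ℝ) / ((∏ j, (p j).factorial) * (m - ∑ j, p j).factorial) with hAp
  set Aq : ℝ := (m.factorial : ℝ) / ((∏ j, (q j).factorial) * (m - ∑ j, q j).factorial) with hAq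
  have hcongr2 : ∀ z : Fin n → ℂ,
      ((Real.sqrt Ap : ℂ) * ∏ j, z j ^ p j) *
        (starRingEnd ℂ) ((Real.sqrt Aq : ℂ) * ∏ j, z j ^ q j) =
      ((Real.sqrt Ap : ℝ) : ℂ) * ((Real.sqrt Aq : ℝ) : ℂ) *
        ((∏ j, z j ^ p j) * (∏ j, (starRingEnd ℂ) (z j) ^ q j)) := by
    intro z
    rw [map_mul, Complex.conj_ofReal, map_prod]
    simp_rw [map_pow]
    ring
  rw [show (fun z : Fin n → ℂ =>
      ((Real.sqrt Ap : ℂ) * ∏ j, z j ^ p j) *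
        (starRingEnd ℂ) ((Real.sqrt Aq : ℂ) * ∏ j, z j ^ q j)) = fun z : Fin n → ℂ =>
      ((Real.sqrt Ap : ℝ) : ℂ) * ((Real.sqrt Aq : ℝ) : ℂ) *
        ((∏ j, z j ^ p j) * (∏ j, (starRingEnd ℂ) (z j) ^ q j)) from funext hcongr2]
  rw [show ∀ (g : (Fin n → ℂ) → ℂ) (r : ℂ), (fun z => r * g z) = fun z => r * g z from
    fun _ _ => rfl]
  rw [integral_const_mul, part1]
  rcases eq_or_ne p q with rfl | hne
  · rw [if_pos rfl, if_pos rfl]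
    have hnum : (0:ℝ) < (∏ j, (p j).factorial : ℕ) * ((m - ∑ j, p j).factorial : ℕ) := by
      have := Nat.factorial_pos (m - ∑ j, p j)
      have h2 : 0 < ∏ j, (p j).factorial := Finset.prod_pos fun j _ => Nat.factorial_pos _
      positivity
    have hApq : Ap = Aq := rfl
    rw [← hApq]
    have hAppos : 0 < Ap := by
      rw [hAp]
      apply div_pos
      · exact_mod_cast Nat.factorial_pos m
      · push_cast at hnum ⊢
        exact_mod_cast hnum
    rw [← Complex.ofReal_mul]
    have hs : Real.sqrt Ap * Real.sqrt Ap = Ap := Real.mul_self_sqrt hAppos.le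
    rw [hs]
    rw [show (((∏ j, (p j).factorial) * (m - ∑ j, p j).factorial : ℕ) : ℂ) =
      (((((∏ j, (p j).factorial) * (m - ∑ j, p j).factorial : ℕ)) : ℝ) : ℂ) by push_cast; ring,
      show ((m.factorial : ℕ) : ℂ) = (((m.factorial : ℕ) : ℝ) : ℂ) by push_cast; ring,
      ← Complex.ofReal_div, ← Complex.ofReal_mul, show (1 : ℂ) = ((1:ℝ) : ℂ) by norm_num]
    congr 1
    rw [hAp]
    have hm : ((m.factorial : ℝ)) ≠ 0 := by exact_mod_cast Nat.factorial_ne_zero m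
    push_cast at hnum ⊢
    field_simp
  · rw [if_neg hne, if_neg hne, mul_zero]
end

section
/- For a multi-index p ∈ ℕⁿ, the monomial z^p belongs to L²(ℂⁿ, ν_m), i.e. ∫_{ℂⁿ} |z^p|² dν_m(z) < ∞, if and only if |p| ≤ m. -/
open MeasureTheory Module
open scoped ENNReal NNReal


lemma sum_abs_sq_cont (n : ℕ) :
    Continuous fun z : Fin n → ℂ => 1 + ∑ j, ‖z j‖ ^ 2 :=
  continuous_const.add (continuous_finset_sum _ fun j _ =>
    (continuous_norm.comp (continuous_apply j)).pow 2)

lemma norm_sq_le (n : ℕ) (z : Fin n → ℂ) : ‖z‖ ^ 2 ≤ ∑ j, ‖z j‖ ^ 2 := by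
  have hS : 0 ≤ ∑ j, ‖z j‖ ^ 2 :=
    Finset.sum_nonneg fun j _ => sq_nonneg _
  have h1 : ‖z‖ ≤ Real.sqrt (∑ j, ‖z j‖ ^ 2) := by
    rw [pi_norm_le_iff_of_nonneg (Real.sqrt_nonneg _)]
    intro i
    rw [show ‖z i‖ = ‖z i‖ from rfl]
    rw [Real.le_sqrt (norm_nonneg _) hS]
    exact Finset.single_le_sum (fun j _ => sq_nonneg (‖z j‖)) (Finset.mem_univ i)
  calc ‖z‖ ^ 2 ≤ Real.sqrt (∑ j, ‖z j‖ ^ 2) ^ 2 :=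
        pow_le_pow_left₀ (norm_nonneg z) h1 2
    _ = ∑ j, ‖z j‖ ^ 2 := Real.sq_sqrt hS

lemma aux_integrable_s3 (n k : ℕ) (hk : n < k) :
    Integrable (fun z : Fin n → ℂ => (((1 + ∑ j, ‖z j‖ ^ 2) ^ k)⁻¹)) := by
  have hfr : finrank ℝ (Fin n → ℂ) = 2 * n := by
    simp [finrank_pi_fintype, Complex.finrank_real_complex, mul_comm]
  have hk' : (finrank ℝ (Fin n → ℂ) : ℝ) < (2 * k : ℕ) := by
    rw [hfr]; exact_mod_cast by omega
  have h := integrable_rpow_neg_one_add_norm_sq (E := Fin n → ℂ) (μ := volume)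
      (r := (2 * k : ℕ)) hk'
  refine h.mono' ?_ (Filter.Eventually.of_forall fun z => ?_)
  · apply Continuous.aestronglyMeasurable
    apply Continuous.inv₀ ((sum_abs_sq_cont n).pow k)
    intro z
    have hS : 0 ≤ ∑ j, ‖z j‖ ^ 2 :=
      Finset.sum_nonneg fun j _ => sq_nonneg _
    exact pow_ne_zero _ (ne_of_gt (by linarith))
  · have hS : 0 ≤ ∑ j, ‖z j‖ ^ 2 :=
      Finset.sum_nonneg fun j _ => sq_nonneg _
    have h1 : (0:ℝ) < 1 + ∑ j, ‖z j‖ ^ 2 := by linarith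
    rw [Real.norm_eq_abs, abs_of_nonneg (by positivity)]
    have h2 : ((1:ℝ) + ‖z‖ ^ 2) ^ (-(2 * k : ℕ) / 2 : ℝ) = (((1:ℝ) + ‖z‖ ^ 2) ^ k)⁻¹ := by
      have hb : (0:ℝ) < 1 + ‖z‖ ^ 2 := by positivity
      rw [show (-(2 * k : ℕ) / 2 : ℝ) = -(k:ℕ) by push_cast; ring,
        Real.rpow_neg hb.le, Real.rpow_natCast]
    rw [h2]
    apply inv_anti₀ (by positivity)
    exact pow_le_pow_left₀ (by positivity) (by linarith [norm_sq_le n z]) k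



lemma aux_divergent (n m : ℕ) (hn : 1 ≤ n) (p : Fin n → ℕ) (hp : m + 1 ≤ ∑ j, p j) :
    ∫⁻ z : Fin n → ℂ, ENNReal.ofReal ((∏ j, ‖z j‖ ^ p j) ^ 2 *
      (((1 + ∑ j, ‖z j‖ ^ 2) ^ (n + m + 1))⁻¹)) = ∞ := by
  set N := n + m + 1 with hN
  set s := ∑ j, p j with hs
  set G : (Fin n → ℂ) → ℝ := fun z => (∏ j, ‖z j‖ ^ p j) ^ 2 *
      (((1 + ∑ j, ‖z j‖ ^ 2) ^ N)⁻¹) with hG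
  -- annuli
  set ann : ℕ → Set ℂ := fun k => Metric.ball (0:ℂ) (2^(k+1)) \ Metric.ball 0 (2^k) with hann
  have mem_ann : ∀ k (w : ℂ), w ∈ ann k ↔ (2:ℝ)^k ≤ ‖w‖ ∧ ‖w‖ < 2^(k+1) := by
    intro k w
    simp [hann, Metric.mem_ball, Complex.dist_eq, not_lt, and_comm]
  set A : ℕ → Set (Fin n → ℂ) := fun k => Set.univ.pi fun _ => ann k with hA
  have hAmeas : ∀ k, MeasurableSet (A k) :=
    fun k => MeasurableSet.univ_pi fun _ => measurableSet_ball.diff measurableSet_ball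
  have hAdisj : Pairwise (Function.onFun Disjoint A) := by
    have key : ∀ k l, k < l → Disjoint (A k) (A l) := by
      intro k l hkl
      rw [Set.disjoint_left]
      intro z hzk hzl
      have h1 := (mem_ann k (z ⟨0, hn⟩)).1 (Set.mem_univ_pi.1 hzk ⟨0, hn⟩)
      have h2 := (mem_ann l (z ⟨0, hn⟩)).1 (Set.mem_univ_pi.1 hzl ⟨0, hn⟩)
      have h3 : (2:ℝ)^(k+1) ≤ 2^l := pow_le_pow_right₀ one_le_two hkl
      linarith [h1.2, h2.1]
    intro k l hkl
    rcases hkl.lt_or_gt with h | h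
    · exact key _ _ h
    · exact (key _ _ h).symm
  -- volume lower bound for A k
  have hvol : ∀ k, ENNReal.ofReal ((4^k/4)^n) ≤ volume (A k) := by
    intro k
    have hρ : (0:ℝ) ≤ 2^k/2 := by positivity
    have hball : Metric.ball (((3 * 2^k / 2 : ℝ) : ℂ)) (2^k/2) ⊆ ann k := by
      intro w hw
      rw [Metric.mem_ball, Complex.dist_eq] at hw
      set c : ℂ := ((3 * 2^k / 2 : ℝ) : ℂ)
      have hcabs : ‖c‖ = 3 * 2^k / 2 := by
        rw [Complex.norm_real, Real.norm_eq_abs, abs_of_nonneg (by positivity)]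
      have hb1 : ‖w‖ - ‖c‖ ≤ ‖w - c‖ := by
        simpa using norm_sub_norm_le w c
      have hb2 : ‖c‖ - ‖w‖ ≤ ‖w - c‖ := by
        simpa [norm_sub_rev] using norm_sub_norm_le c w
      rw [mem_ann]
      constructor
      · nlinarith
      · have : (2:ℝ)^(k+1) = 2 * 2^k := by ring
        nlinarith
    calc ENNReal.ofReal ((4^k/4)^n)
        = ENNReal.ofReal ((2^k/2:ℝ)^2) ^ n := by
          have hbase : ((2:ℝ)^k/2)^2 = 4^k/4 := by
            rw [div_pow, ← pow_mul, mul_comm, pow_mul]; norm_num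
          rw [← ENNReal.ofReal_pow (by positivity : (0:ℝ) ≤ ((2:ℝ)^k/2)^2), hbase]
      _ ≤ (ENNReal.ofReal (2^k/2) ^ 2 * NNReal.pi) ^ n := by
          gcongr
          · rw [ENNReal.ofReal_pow hρ]
            exact le_mul_of_one_le_right zero_le (by
              rw [← ENNReal.coe_one, ENNReal.coe_le_coe, ← NNReal.coe_le_coe]
              simpa using by linarith [Real.pi_gt_three])
      _ = ∏ _j : Fin n, (ENNReal.ofReal (2^k/2) ^ 2 * NNReal.pi) := by
          rw [Finset.prod_const, Finset.card_univ, Fintype.card_fin]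
      _ = volume (Set.univ.pi fun _ : Fin n => Metric.ball (((3 * 2^k / 2 : ℝ) : ℂ)) (2^k/2)) := by
          rw [volume_pi_pi]
          simp [Complex.volume_ball]
      _ ≤ volume (A k) := by
          apply measure_mono
          exact Set.pi_mono fun j _ => hball
  -- pointwise lower bound on A k
  set ε : ℝ := ((1+4*(n:ℝ))^N * 4^n)⁻¹ with hε
  have hεpos : 0 < ε := by positivity
  have hGmeas : Measurable fun z => ENNReal.ofReal (G z) := by
    apply ENNReal.measurable_ofReal.comp
    apply Measurable.mul
    · exact ((Finset.measurable_prod _ fun j _ =>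
        (continuous_norm.measurable.comp (measurable_pi_apply j)).pow_const (p j)).pow_const 2)
    · exact (((measurable_const.add (Finset.measurable_sum _ fun j _ =>
        (continuous_norm.measurable.comp (measurable_pi_apply j)).pow_const 2)).pow_const N).inv)
  have hterm : ∀ k, ENNReal.ofReal ε ≤ ∫⁻ z in A k, ENNReal.ofReal (G z) := by
    intro k
    set a : ℝ := 4^k with ha'
    have ha0 : (0:ℝ) < a := by positivity
    have ha1 : (1:ℝ) ≤ a := one_le_pow₀ (by norm_num)
    set ck : ℝ := a^s * (((1+4*(n:ℝ)) * a)^N)⁻¹ with hck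
    have hpt : ∀ z ∈ A k, ck ≤ G z := by
      intro z hz
      have hz' := fun j => (mem_ann k (z j)).1 (Set.mem_univ_pi.1 hz j)
      have hQ : (1:ℝ) + ∑ j, ‖z j‖ ^ 2 ≤ (1+4*(n:ℝ)) * a := by
        have hsum : ∑ j, ‖z j‖ ^ 2 ≤ ∑ _j : Fin n, (4:ℝ) * a := by
          apply Finset.sum_le_sum
          intro j _
          have := (hz' j).2
          have h0 : (0:ℝ) ≤ ‖z j‖ := norm_nonneg _
          have : ‖z j‖ ^ 2 ≤ ((2:ℝ)^(k+1)) ^ 2 := by nlinarith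
          calc ‖z j‖ ^ 2 ≤ ((2:ℝ)^(k+1)) ^ 2 := this
            _ = 4 * a := by
              rw [ha', ← pow_mul, show (4:ℝ)=2^2 by norm_num, ← pow_mul, ← pow_add]
              congr 1; ring
        rw [Finset.sum_const, Finset.card_univ, Fintype.card_fin, nsmul_eq_mul] at hsum
        nlinarith
      have hQ0 : (0:ℝ) < 1 + ∑ j, ‖z j‖ ^ 2 := by
        have : (0:ℝ) ≤ ∑ j, ‖z j‖ ^ 2 :=
          Finset.sum_nonneg fun j _ => sq_nonneg _
        linarith
      have hprod : a ^ s ≤ (∏ j, ‖z j‖ ^ p j) ^ 2 := by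
        have h1 : ((2:ℝ)^k) ^ s ≤ ∏ j, ‖z j‖ ^ p j := by
          rw [← Finset.prod_pow_eq_pow_sum]
          apply Finset.prod_le_prod
          · intro j _; positivity
          · intro j _
            exact pow_le_pow_left₀ (by positivity) (hz' j).1 _
        calc a ^ s = (((2:ℝ)^k) ^ s) ^ 2 := by
              rw [ha', show (4:ℝ) = 2^2 by norm_num, ← pow_mul, ← pow_mul, ← pow_mul, ← pow_mul]
              congr 1; ring
          _ ≤ (∏ j, ‖z j‖ ^ p j) ^ 2 :=
              pow_le_pow_left₀ (by positivity) h1 2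
      have hinv : (((1+4*(n:ℝ)) * a)^N)⁻¹ ≤ (((1:ℝ) + ∑ j, ‖z j‖ ^ 2) ^ N)⁻¹ := by
        apply inv_anti₀ (by positivity)
        exact pow_le_pow_left₀ hQ0.le hQ _
      calc ck = a^s * (((1+4*(n:ℝ)) * a)^N)⁻¹ := rfl
        _ ≤ (∏ j, ‖z j‖ ^ p j) ^ 2 *
              (((1:ℝ) + ∑ j, ‖z j‖ ^ 2) ^ N)⁻¹ := by
            apply mul_le_mul hprod hinv (by positivity) (by positivity)
        _ = G z := rfl
    have hckvol : ENNReal.ofReal ε ≤ ENNReal.ofReal ck * ENNReal.ofReal ((4^k/4)^n) := by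
      rw [← ENNReal.ofReal_mul (by positivity)]
      apply ENNReal.ofReal_le_ofReal
      have e1 : ck * ((4^k/4:ℝ))^n = a^(s+n) / (a^N * ((1+4*(n:ℝ))^N * 4^n)) := by
        rw [hck, mul_pow, div_pow, ha']
        field_simp
        ring
      rw [e1, hε]
      rw [le_div_iff₀ (by positivity)]
      have e2 : ((1+4*(n:ℝ))^N * 4^n)⁻¹ * (a ^ N * ((1+4*(n:ℝ))^N * 4^n)) = a ^ N := by
        field_simp
      rw [e2]
      exact pow_le_pow_right₀ ha1 (by omega)
    calc ENNReal.ofReal ε ≤ ENNReal.ofReal ck * ENNReal.ofReal ((4^k/4)^n) := hckvol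
      _ ≤ ENNReal.ofReal ck * volume (A k) := by gcongr; exact hvol k
      _ = ∫⁻ _z in A k, ENNReal.ofReal ck := (setLIntegral_const _ _).symm
      _ ≤ ∫⁻ z in A k, ENNReal.ofReal (G z) := by
          apply setLIntegral_mono hGmeas
          intro z hz
          exact ENNReal.ofReal_le_ofReal (hpt z hz)
  -- conclude
  rw [← top_le_iff]
  calc (⊤ : ℝ≥0∞) = ∑' _k : ℕ, ENNReal.ofReal ε :=
        (ENNReal.tsum_const_eq_top_of_ne_zero (ENNReal.ofReal_pos.2 hεpos).ne').symm
    _ ≤ ∑' k : ℕ, ∫⁻ z in A k, ENNReal.ofReal (G z) := ENNReal.tsum_le_tsum hterm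
    _ = ∫⁻ z in ⋃ k, A k, ENNReal.ofReal (G z) := (lintegral_iUnion hAmeas hAdisj _).symm
    _ ≤ ∫⁻ z, ENNReal.ofReal (G z) := setLIntegral_le_lintegral _ _

lemma measG (n N : ℕ) (p : Fin n → ℕ) :
    Measurable fun z : Fin n → ℂ => ENNReal.ofReal ((∏ j, ‖z j‖ ^ p j) ^ 2 *
      (((1 + ∑ j, ‖z j‖ ^ 2) ^ N)⁻¹)) := by
  apply ENNReal.measurable_ofReal.comp
  apply Measurable.mul
  · exact ((Finset.measurable_prod _ fun j _ =>
      (continuous_norm.measurable.comp (measurable_pi_apply j)).pow_const (p j)).pow_const 2)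
  · exact (((measurable_const.add (Finset.measurable_sum _ fun j _ =>
      (continuous_norm.measurable.comp (measurable_pi_apply j)).pow_const 2)).pow_const N).inv)


/-- The monomial `z^p` belongs to `L²(ℂⁿ, ν_m)`, i.e. `∫ |z^p|² dν_m < ∞`,
if and only if `|p| ≤ m`. -/
theorem stmt3 (n m : ℕ) (hn : 1 ≤ n) (p : Fin n → ℕ) :
    (∫⁻ z : Fin n → ℂ,
        ENNReal.ofReal (‖∏ j, z j ^ p j‖ ^ 2) ∂(nu n m)) < ⊤ ↔
      ∑ j, p j ≤ m := by
  set N := n + m + 1 with hN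
  set C₀ : ℝ := ((n + m).factorial : ℝ) / (Real.pi ^ n * m.factorial) with hC₀'
  have hC₀ : 0 < C₀ := by
    apply div_pos (by exact_mod_cast (n+m).factorial_pos)
    have := Real.pi_pos
    have := m.factorial_pos
    positivity
  set Q : (Fin n → ℂ) → ℝ := fun z => 1 + ∑ j, ‖z j‖ ^ 2 with hQ'
  have hQpos : ∀ z, 0 < Q z := by
    intro z
    have : (0:ℝ) ≤ ∑ j, ‖z j‖ ^ 2 := Finset.sum_nonneg fun j _ => sq_nonneg _
    simp only [hQ']; linarith
  set G : (Fin n → ℂ) → ℝ := fun z => (∏ j, ‖z j‖ ^ p j) ^ 2 * ((Q z ^ N)⁻¹)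
    with hG'
  have hfm : Measurable (fun z : Fin n → ℂ => ENNReal.ofReal (C₀ * ((Q z ^ N)⁻¹))) := by
    apply ENNReal.measurable_ofReal.comp
    exact measurable_const.mul (((measurable_const.add (Finset.measurable_sum _ fun j _ =>
      (continuous_norm.measurable.comp (measurable_pi_apply j)).pow_const 2)).pow_const N).inv)
  have hgm : Measurable (fun z : Fin n → ℂ => ENNReal.ofReal (‖∏ j, z j ^ p j‖ ^ 2)) := by
    apply ENNReal.measurable_ofReal.comp
    exact (continuous_norm.measurable.comp
      (Finset.measurable_prod _ fun j _ => (measurable_pi_apply j).pow_const (p j))).pow_const 2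
  have hstep : (∫⁻ z : Fin n → ℂ,
        ENNReal.ofReal (‖∏ j, z j ^ p j‖ ^ 2) ∂(nu n m))
      = ENNReal.ofReal C₀ * ∫⁻ z, ENNReal.ofReal (G z) := by
    rw [nu, lintegral_withDensity_eq_lintegral_mul volume hfm hgm]
    rw [← lintegral_const_mul (ENNReal.ofReal C₀) ((measG n N p))]
    apply lintegral_congr
    intro z
    simp only [Pi.mul_apply]
    rw [ENNReal.ofReal_mul hC₀.le, mul_assoc, ← ENNReal.ofReal_mul (by positivity)]
    congr 2
    have habs : ‖∏ j, z j ^ p j‖ = ∏ j, ‖z j‖ ^ p j := by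
      simp [map_prod, map_pow]
    rw [habs]
    simp only [hQ']
    ring
  rw [hstep]
  constructor
  · intro h
    by_contra hm
    push_neg at hm
    have hdiv : ∫⁻ z, ENNReal.ofReal (G z) = ∞ := aux_divergent n m hn p hm
    rw [hdiv, ENNReal.mul_top (ENNReal.ofReal_pos.2 hC₀).ne'] at h
    exact absurd h (lt_irrefl _)
  · intro hle
    have hfin : ∫⁻ z, ENNReal.ofReal (G z) < ⊤ := by
      have hbound : ∀ z, G z ≤ ((Q z ^ (n+1))⁻¹) := by
        intro z
        have hQ1 : (1:ℝ) ≤ Q z := by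
          have : (0:ℝ) ≤ ∑ j, ‖z j‖ ^ 2 := Finset.sum_nonneg fun j _ => sq_nonneg _
          simp only [hQ']; linarith
        have hA : (∏ j, ‖z j‖ ^ p j) ^ 2 ≤ Q z ^ m := by
          have h1 : (∏ j, ‖z j‖ ^ p j) ^ 2 = ∏ j, (‖z j‖ ^ 2) ^ p j := by
            rw [← Finset.prod_pow]
            exact Finset.prod_congr rfl fun j _ => by rw [← pow_mul, ← pow_mul, mul_comm]
          rw [h1]
          calc ∏ j, (‖z j‖ ^ 2) ^ p j ≤ ∏ j, Q z ^ p j := by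
                apply Finset.prod_le_prod
                · intro j _; positivity
                · intro j _
                  apply pow_le_pow_left₀ (sq_nonneg _)
                  have : ‖z j‖ ^ 2 ≤ ∑ i, ‖z i‖ ^ 2 :=
                    Finset.single_le_sum (f := fun i => ‖z i‖ ^ 2) (fun i _ => sq_nonneg _) (Finset.mem_univ j)
                  simp only [hQ']; linarith
            _ = Q z ^ (∑ j, p j) := Finset.prod_pow_eq_pow_sum _ _ _
            _ ≤ Q z ^ m := pow_le_pow_right₀ hQ1 hle
        have hsplit : Q z ^ m * (Q z ^ N)⁻¹ = (Q z ^ (n+1))⁻¹ := by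
          have hQ0 : Q z ≠ 0 := (hQpos z).ne'
          rw [show N = (n+1) + m by omega, pow_add]
          field_simp
        calc G z ≤ Q z ^ m * (Q z ^ N)⁻¹ :=
              mul_le_mul_of_nonneg_right hA (by positivity)
          _ = (Q z ^ (n+1))⁻¹ := hsplit
      calc ∫⁻ z, ENNReal.ofReal (G z) ≤ ∫⁻ z, ENNReal.ofReal ((Q z ^ (n+1))⁻¹) :=
            lintegral_mono fun z => ENNReal.ofReal_le_ofReal (hbound z)
        _ < ⊤ := (aux_integrable_s3 n (n+1) (lt_add_one n)).lintegral_lt_top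
    exact ENNReal.mul_lt_top ENNReal.ofReal_lt_top hfin
end

section
/- A(n) is a maximal Abelian subgroup of PSU(n+1): if H is a subgroup of PSU(n+1) that is commutative, connected in the subspace topology, and contains A(n), then H = A(n). -/
/-- `SU(n+1)`: the topological group of `(n+1)×(n+1)` complex unitary matrices with
determinant `1`, as a subgroup of the unitary group. -/
def SU (n : ℕ) : Subgroup (Matrix.unitaryGroup (Fin (n + 1)) ℂ) where
  carrier := {A | (A : Matrix (Fin (n + 1)) (Fin (n + 1)) ℂ).det = 1}
  one_mem' := by simp
  mul_mem' := by
    intro A B hA hB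
    simp only [Set.mem_setOf_eq, Submonoid.coe_mul, Matrix.det_mul] at *
    rw [hA, hB, one_mul]
  inv_mem' := by
    intro A hA
    simp only [Set.mem_setOf_eq] at *
    have h : ((A⁻¹ : Matrix.unitaryGroup (Fin (n + 1)) ℂ) :
        Matrix (Fin (n + 1)) (Fin (n + 1)) ℂ) =
        star (A : Matrix (Fin (n + 1)) (Fin (n + 1)) ℂ) := by
      rw [← Unitary.star_eq_inv]
      rfl
    rw [h, Matrix.star_eq_conjTranspose, Matrix.det_conjTranspose, hA, star_one]

/-- `Â(n)`: the subgroup of diagonal matrices in `SU(n+1)`. -/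
def Ahat (n : ℕ) : Subgroup (SU n) where
  carrier := {A | (A.1.1 : Matrix (Fin (n + 1)) (Fin (n + 1)) ℂ).IsDiag}
  one_mem' := Matrix.isDiag_one
  mul_mem' := by
    intro A B hA hB i j hij
    show (A.1.1 * B.1.1) i j = 0
    rw [Matrix.mul_apply]
    apply Finset.sum_eq_zero
    intro k _
    by_cases hk : i = k
    · rw [← hk, hB hij, mul_zero]
    · rw [hA (by exact hk), zero_mul]
  inv_mem' := by
    intro A hA
    show ((A⁻¹ : SU n).1.1).IsDiag
    have h : (A⁻¹ : SU n).1.1 = star (A.1.1) :=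
      calc (A⁻¹ : SU n).1.1 = (((A.1)⁻¹ : Matrix.unitaryGroup (Fin (n + 1)) ℂ) :
            Matrix (Fin (n + 1)) (Fin (n + 1)) ℂ) := rfl
        _ = ((star (A.1) : Matrix.unitaryGroup (Fin (n + 1)) ℂ) :
            Matrix (Fin (n + 1)) (Fin (n + 1)) ℂ) := by rw [Unitary.star_eq_inv]
        _ = star (A.1.1) := rfl
    rw [h, Matrix.star_eq_conjTranspose]
    exact hA.conjTranspose

/-- The central subgroup `Z = {ζ·I : ζ^{n+1} = 1}` of `SU(n+1)`. -/
def Zc (n : ℕ) : Subgroup (SU n) where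
  carrier := {A | ∃ ζ : ℂ, ζ ^ (n + 1) = 1 ∧
    A.1.1 = ζ • (1 : Matrix (Fin (n + 1)) (Fin (n + 1)) ℂ)}
  one_mem' := ⟨1, one_pow _, by simp⟩
  mul_mem' := by
    rintro A B ⟨ζ, hζ, hA⟩ ⟨ξ, hξ, hB⟩
    refine ⟨ζ * ξ, by rw [mul_pow, hζ, hξ, one_mul], ?_⟩
    show A.1.1 * B.1.1 = _
    rw [hA, hB, smul_mul_smul_comm, one_mul]
  inv_mem' := by
    rintro A ⟨ζ, hζ, hA⟩
    refine ⟨star ζ, by rw [← star_pow, hζ, star_one], ?_⟩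
    have h : (A⁻¹ : SU n).1.1 = star (A.1.1) :=
      calc (A⁻¹ : SU n).1.1 = (((A.1)⁻¹ : Matrix.unitaryGroup (Fin (n + 1)) ℂ) :
            Matrix (Fin (n + 1)) (Fin (n + 1)) ℂ) := rfl
        _ = ((star (A.1) : Matrix.unitaryGroup (Fin (n + 1)) ℂ) :
            Matrix (Fin (n + 1)) (Fin (n + 1)) ℂ) := by rw [Unitary.star_eq_inv]
        _ = star (A.1.1) := rfl
    rw [h, hA, star_smul, star_one]

instance Zc_normal (n : ℕ) : (Zc n).Normal := by
  constructor
  rintro A ⟨ζ, hζ, hA⟩ g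
  refine ⟨ζ, hζ, ?_⟩
  show g.1.1 * A.1.1 * (g⁻¹ : SU n).1.1 = ζ • 1
  have h1 : g.1.1 * (g⁻¹ : SU n).1.1 = 1 :=
    congrArg (fun B : SU n => B.1.1) (mul_inv_cancel g)
  rw [hA, mul_smul_comm, smul_mul_assoc, mul_one, h1]

/-- `PSU(n+1) = SU(n+1)/Z`, as a quotient topological group. -/
abbrev PSU (n : ℕ) := SU n ⧸ Zc n

/-- The quotient homomorphism `λ : SU(n+1) → PSU(n+1)`. -/
noncomputable def lam (n : ℕ) : SU n →* PSU n := QuotientGroup.mk' (Zc n)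

/-- `A(n) = λ(Â(n))`, the image in `PSU(n+1)` of the diagonal subgroup of `SU(n+1)`. -/
noncomputable def An (n : ℕ) : Subgroup (PSU n) := (Ahat n).map (lam n)


/-- angles -/
noncomputable def theta (n : ℕ) (k : Fin (n+1)) : ℝ := (2 * (k:ℝ) - n) / (n+1)

noncomputable def dvec (n : ℕ) (k : Fin (n+1)) : ℂ := Complex.exp ((theta n k : ℂ) * Complex.I)

lemma theta_abs_le (n : ℕ) (k : Fin (n+1)) : |theta n k| ≤ 1 := by
  have h0 : (0:ℝ) ≤ (k:ℝ) := Nat.cast_nonneg _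
  have h1 : (k:ℝ) ≤ n := by exact_mod_cast Fin.is_le k
  rw [theta, abs_div, abs_of_pos (by positivity : (0:ℝ) < (n:ℝ)+1)]
  rw [div_le_one (by positivity)]
  rw [abs_le]; constructor <;> linarith

lemma theta_mem (n : ℕ) (k : Fin (n+1)) :
    theta n k ∈ Set.Icc (-(Real.pi/2)) (Real.pi/2) := by
  have h := theta_abs_le n k
  have hp : (3:ℝ) < Real.pi := Real.pi_gt_three
  rw [abs_le] at h
  constructor <;> [linarith [h.1]; linarith [h.2]]

lemma theta_inj (n : ℕ) : Function.Injective (theta n) := by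
  intro j k h
  rw [theta, theta, div_eq_div_iff (by positivity) (by positivity)] at h
  have : (j:ℝ) = (k:ℝ) := by nlinarith [sq_nonneg ((n:ℝ)+1)]
  exact Fin.ext (by exact_mod_cast this)

lemma dvec_inj (n : ℕ) : Function.Injective (dvec n) := by
  intro j k h
  apply theta_inj n
  apply Real.injOn_sin (theta_mem n j) (theta_mem n k)
  have := congrArg Complex.im h
  rwa [dvec, dvec, Complex.exp_ofReal_mul_I_im, Complex.exp_ofReal_mul_I_im] at this

lemma theta_sum (n : ℕ) : ∑ k : Fin (n+1), theta n k = 0 := by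
  simp only [theta]
  rw [← Finset.sum_div]
  have h : ∑ k : Fin (n+1), (2 * (k:ℝ) - n) = 0 := by
    rw [Fin.sum_univ_eq_sum_range (fun k => 2 * (k:ℝ) - (n:ℝ))]
    rw [Finset.sum_sub_distrib, ← Finset.mul_sum, Finset.sum_const, Finset.card_range]
    have h3 : ((∑ i ∈ Finset.range (n+1), i : ℕ) : ℝ) * 2 = ((n+1) * n : ℕ) := by
      exact_mod_cast congrArg (Nat.cast : ℕ → ℝ) (by simpa using Finset.sum_range_id_mul_two (n+1))
    rw [nsmul_eq_mul]
    push_cast at h3 ⊢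
    linarith [h3]
  rw [h, zero_div]

lemma dvec_det (n : ℕ) : (Matrix.diagonal (dvec n)).det = 1 := by
  rw [Matrix.det_diagonal]
  simp only [dvec]
  rw [← Complex.exp_sum, ← Finset.sum_mul, ← Complex.ofReal_sum, theta_sum]
  simp

lemma dvec_mul_star (n : ℕ) (k : Fin (n+1)) : dvec n k * star (dvec n k) = 1 := by
  rw [dvec, Complex.star_def, ← Complex.exp_conj, ← Complex.exp_add,
    map_mul, Complex.conj_ofReal, Complex.conj_I]
  have h : (theta n k : ℂ) * Complex.I + (theta n k : ℂ) * (-Complex.I) = 0 := by ring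
  rw [h, Complex.exp_zero]

lemma dvec_unitary (n : ℕ) : Matrix.diagonal (dvec n) ∈ Matrix.unitaryGroup (Fin (n+1)) ℂ := by
  rw [Matrix.mem_unitaryGroup_iff, Matrix.star_eq_conjTranspose,
    Matrix.diagonal_conjTranspose, Matrix.diagonal_mul_diagonal]
  ext i j
  rcases eq_or_ne i j with rfl | hij
  · simpa using dvec_mul_star n i
  · simp [Matrix.diagonal_apply_ne _ hij, Matrix.one_apply_ne hij]

lemma dvec_trace_ne (n : ℕ) : (Matrix.diagonal (dvec n)).trace ≠ 0 := by
  have hre : 0 < (Matrix.diagonal (dvec n)).trace.re := by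
    rw [Matrix.trace_diagonal, Complex.re_sum]
    apply Finset.sum_pos
    · intro k _
      simp only [dvec, Complex.exp_ofReal_mul_I_re]
      apply Real.cos_pos_of_mem_Ioo
      have h := theta_abs_le n k
      have hp : (3:ℝ) < Real.pi := Real.pi_gt_three
      rw [abs_le] at h
      rw [Set.mem_Ioo]
      constructor <;> linarith [h.1, h.2]
    · exact Finset.univ_nonempty
  intro h
  rw [h] at hre
  simp at hre

lemma comm_isDiag {m : ℕ} {v : Fin m → ℂ} (hv : Function.Injective v)
    {G : Matrix (Fin m) (Fin m) ℂ} (h : G * Matrix.diagonal v = Matrix.diagonal v * G) :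
    G.IsDiag := by
  intro i j hij
  have h1 := congrFun (congrFun h i) j
  rw [Matrix.mul_diagonal, Matrix.diagonal_mul] at h1
  have h2 : G i j * (v j - v i) = 0 := by ring_nf; linear_combination h1
  rcases mul_eq_zero.mp h2 with h3 | h3
  · exact h3
  · exact absurd (hv (by linear_combination h3)) (Ne.symm hij)

noncomputable def dmat (n : ℕ) : SU n :=
  ⟨⟨Matrix.diagonal (dvec n), dvec_unitary n⟩, dvec_det n⟩

lemma dmat_mem_Ahat (n : ℕ) : dmat n ∈ Ahat n := Matrix.isDiag_diagonal (dvec n)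

/-- `A(n)` is a maximal Abelian subgroup of `PSU(n+1)`: any commutative subgroup of
`PSU(n+1)` that is connected in the subspace topology and contains `A(n)` equals `A(n)`. -/
theorem stmt15 (n : ℕ) (hn : 1 ≤ n) (H : Subgroup (PSU n))
    (hcomm : ∀ x ∈ H, ∀ y ∈ H, x * y = y * x)
    (hconn : IsConnected (H : Set (PSU n)))
    (hA : An n ≤ H) : H = An n := by
  refine le_antisymm ?_ hA
  intro x hx
  obtain ⟨g, rfl⟩ := QuotientGroup.mk'_surjective (Zc n) x
  have hdH : (QuotientGroup.mk' (Zc n)) (dmat n) ∈ H :=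
    hA ⟨dmat n, dmat_mem_Ahat n, rfl⟩
  have hc : (QuotientGroup.mk' (Zc n)) (g * dmat n)
      = (QuotientGroup.mk' (Zc n)) (dmat n * g) := by
    rw [map_mul, map_mul]
    exact hcomm _ hx _ hdH
  have hz : (g * dmat n)⁻¹ * (dmat n * g) ∈ Zc n := QuotientGroup.eq.mp hc
  obtain ⟨ζ, hζ1, hζM⟩ := hz
  set G : Matrix (Fin (n+1)) (Fin (n+1)) ℂ := g.1.1 with hG
  set D : Matrix (Fin (n+1)) (Fin (n+1)) ℂ := Matrix.diagonal (dvec n) with hD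
  have hzeq : dmat n * g = (g * dmat n) * ((g * dmat n)⁻¹ * (dmat n * g)) := by group
  have hm : D * G = ζ • (G * D) := by
    have h1 := congrArg (fun B : SU n => (B.1.1 : Matrix (Fin (n+1)) (Fin (n+1)) ℂ)) hzeq
    have h2 : D * G = (G * D) * (((g * dmat n)⁻¹ * (dmat n * g) : SU n).1.1) := h1
    rw [hζM, mul_smul_comm, mul_one] at h2
    exact h2
  have hGinv : G * ((g⁻¹ : SU n).1.1 : Matrix (Fin (n+1)) (Fin (n+1)) ℂ) = 1 :=
    congrArg (fun B : SU n => (B.1.1 : Matrix (Fin (n+1)) (Fin (n+1)) ℂ)) (mul_inv_cancel g)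
  have hGinv' : ((g⁻¹ : SU n).1.1 : Matrix (Fin (n+1)) (Fin (n+1)) ℂ) * G = 1 :=
    congrArg (fun B : SU n => (B.1.1 : Matrix (Fin (n+1)) (Fin (n+1)) ℂ)) (inv_mul_cancel g)
  set Gi : Matrix (Fin (n+1)) (Fin (n+1)) ℂ := (g⁻¹ : SU n).1.1 with hGi
  have hm2 : Gi * (D * G) = ζ • D := by
    calc Gi * (D * G) = Gi * (ζ • (G * D)) := by
          rw [hm]
      _ = ζ • (Gi * G * D) := by rw [mul_smul_comm, mul_assoc]
      _ = ζ • D := by rw [hGinv', one_mul]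
  have htr : D.trace = ζ * D.trace := by
    have h3 := congrArg Matrix.trace hm2
    rw [Matrix.trace_smul, smul_eq_mul, Matrix.trace_mul_comm Gi (D * G),
      mul_assoc, hGinv, mul_one] at h3
    exact h3
  have hζone : ζ = 1 := by
    have := dvec_trace_ne n
    have h4 : ζ * D.trace = 1 * D.trace := by rw [one_mul, ← htr]
    exact mul_right_cancel₀ this h4
  rw [hζone, one_smul] at hm
  have hdiag : G.IsDiag := comm_isDiag (dvec_inj n) hm.symm
  exact ⟨g, hdiag, rfl⟩
end
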